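/- arXiv:1703.02022 — 4 statements merged into one kernel-verified Lean document; each statement's English description precedes it below -/
import Mathlib

section
/- (Gauss summation) For real parameters A, B, C with C > A + B and C not a nonpositive integer, the value of the hypergeometric function at 1 is ₂F₁(A,B,C;1) = Γ(C)Γ(C−A−B) / (Γ(C−A)Γ(C−B)), where Γ is the Gamma function. -/
open Polynomial Set Filter

/-- Term of the Gauss hypergeometric series: ((A)_n (B)_n / (C)_n) z^n / n!. -/
noncomputable def hypTerm (A B C z : ℝ) (n : ℕ) : ℝ :=
  ((ascPochhammer ℝ n).eval A * (ascPochhammer ℝ n).eval B /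
    (ascPochhammer ℝ n).eval C) * z ^ n / n.factorial

/-- The Gauss hypergeometric function ₂F₁(A,B,C;z), as the sum of its series. -/
noncomputable def hyp2F1 (A B C z : ℝ) : ℝ := ∑' n : ℕ, hypTerm A B C z n

open Finset Topology

lemma poch_prod (x : ℝ) (n : ℕ) :
    (ascPochhammer ℝ n).eval x = ∏ i ∈ Finset.range n, (x + i) := by
  induction n with
  | zero => simp
  | succ n ih => rw [ascPochhammer_succ_eval, ih, Finset.prod_range_succ]

lemma poch_ne_zero {x : ℝ} (hx : ∀ n : ℕ, x ≠ -(n:ℝ)) (n : ℕ) :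
    (ascPochhammer ℝ n).eval x ≠ 0 := by
  rw [poch_prod]
  exact Finset.prod_ne_zero_iff.2 fun i _ => fun h => hx i (by linarith)

lemma poch_pos {x : ℝ} (hx : 0 < x) (n : ℕ) : 0 < (ascPochhammer ℝ n).eval x := by
  rw [poch_prod]
  exact Finset.prod_pos fun i _ => by positivity

lemma poch_abs_le {x a : ℝ} (h : |x| ≤ a) (n : ℕ) :
    |(ascPochhammer ℝ n).eval x| ≤ (ascPochhammer ℝ n).eval a := by
  rw [poch_prod, poch_prod, Finset.abs_prod]
  refine Finset.prod_le_prod (fun i _ => abs_nonneg _) (fun i _ => ?_)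
  calc |x + i| ≤ |x| + i := by
        refine (abs_add_le _ _).trans ?_
        simp [abs_of_nonneg (Nat.cast_nonneg (α := ℝ) i)]
    _ ≤ a + i := by linarith

lemma poch_mono {x y : ℝ} (hx : 0 ≤ x) (hxy : x ≤ y) (n : ℕ) :
    (ascPochhammer ℝ n).eval x ≤ (ascPochhammer ℝ n).eval y := by
  rw [poch_prod, poch_prod]
  exact Finset.prod_le_prod (fun i _ => by positivity) (fun i _ => by linarith)

lemma hypTerm_succ (A B C : ℝ) (hC : ∀ n : ℕ, C ≠ -(n:ℝ)) (n : ℕ) :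
    hypTerm A B C 1 (n+1)
      = hypTerm A B C 1 n * ((A + n) * (B + n) / ((C + n) * (n + 1))) := by
  have hCn : (ascPochhammer ℝ n).eval C ≠ 0 := poch_ne_zero hC n
  have hCn' : C + n ≠ 0 := fun h => hC n (by linarith)
  have hfac : (n.factorial : ℝ) ≠ 0 := Nat.cast_ne_zero.2 n.factorial_ne_zero
  have h1 : ((n:ℝ) + 1) ≠ 0 := by positivity
  simp only [hypTerm, ascPochhammer_succ_eval, Nat.factorial_succ, one_pow, Nat.cast_mul,
    Nat.cast_add, Nat.cast_one]
  field_simp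

lemma hypTerm_zero (A B C : ℝ) : hypTerm A B C 1 0 = 1 := by
  simp [hypTerm]

lemma hyp_decay (A B C : ℝ) (hr : A + B < C) (hC : ∀ n : ℕ, C ≠ -(n:ℝ)) :
    ∃ K : ℝ, 0 ≤ K ∧ ∃ N : ℕ, 1 ≤ N ∧ ∀ n, N ≤ n →
      |hypTerm A B C 1 n| ≤ K * (n:ℝ) ^ (-(1 + (C-A-B)/2)) := by
  set δ : ℝ := (C-A-B)/2 with hδdef
  have hδ : 0 < δ := by simp only [hδdef]; linarith
  obtain ⟨N, hN⟩ := exists_nat_gt (|A| + |B| + |C| + |A*B|/δ + 1)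
  have hN1 : 1 ≤ N := by
    by_contra h
    push_neg at h
    interval_cases N
    · simp only [Nat.cast_zero] at hN
      have := abs_nonneg A; have := abs_nonneg B; have := abs_nonneg C
      have : 0 ≤ |A*B|/δ := by positivity
      linarith
  have step : ∀ n, N ≤ n →
      |hypTerm A B C 1 (n+1)| * ((n:ℝ)+1) ^ (1+δ) ≤ |hypTerm A B C 1 n| * (n:ℝ) ^ (1+δ) := by
    intro n hn
    have hnn : (N:ℝ) ≤ (n:ℝ) := Nat.cast_le.2 hn
    have hnb : |A| + |B| + |C| + |A*B|/δ + 1 < (n:ℝ) := lt_of_lt_of_le hN hnn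
    have habsA := abs_nonneg A; have habsB := abs_nonneg B
    have habsC := abs_nonneg C; have habsAB : 0 ≤ |A*B|/δ := by positivity
    have hA : 0 ≤ A + (n:ℝ) := by have := neg_abs_le A; linarith
    have hB : 0 ≤ B + (n:ℝ) := by have := neg_abs_le B; linarith
    have hCpos : (0:ℝ) < C + n := by have := neg_abs_le C; linarith
    have hn1 : (0:ℝ) < (n:ℝ) + 1 := by linarith
    have hnpos : (0:ℝ) < (n:ℝ) := by linarith
    have haux : δ * (|A*B|/δ) = |A*B| := by field_simp
    have hδn : δ * C + A*B ≤ δ * (n:ℝ) := by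
      have h1 := le_abs_self (A*B); have h2 := le_abs_self C
      nlinarith [mul_le_mul_of_nonneg_left (le_of_lt hnb) (le_of_lt hδ)]
    have hq0 : 0 ≤ (A + n) * (B + n) / ((C + n) * ((n:ℝ) + 1)) := by positivity
    rw [hypTerm_succ A B C hC n, abs_mul, abs_of_nonneg hq0]
    have key : (A + n) * (B + n) / ((C + n) * ((n:ℝ) + 1)) * ((n:ℝ)+1) ^ (1+δ)
        ≤ (n:ℝ) ^ (1+δ) := by
      have h2 : (A + n) * (B + n) / ((C + n) * ((n:ℝ) + 1)) ≤ 1 - (1+δ)/((n:ℝ)+1) := by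
        rw [div_le_iff₀ (by positivity)]
        have h3 : (1+δ)/((n:ℝ)+1) * ((n:ℝ)+1) = 1+δ := by field_simp
        nlinarith
      have h4 : 1 - (1+δ)/((n:ℝ)+1) ≤ ((n:ℝ)/((n:ℝ)+1)) ^ (1+δ) := by
        have hs : (-1:ℝ) ≤ -(1/((n:ℝ)+1)) := by
          rw [neg_le_neg_iff]
          rw [div_le_one hn1]; linarith
        have := one_add_mul_self_le_rpow_one_add hs (le_add_of_nonneg_right hδ.le)
        have he1 : 1 + -(1/((n:ℝ)+1)) = (n:ℝ)/((n:ℝ)+1) := by field_simp; ring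
        have he2 : 1 + (1+δ) * -(1/((n:ℝ)+1)) = 1 - (1+δ)/((n:ℝ)+1) := by ring
        rw [he1, he2] at this
        exact this
      have h5 : ((n:ℝ)/((n:ℝ)+1)) ^ (1+δ) = (n:ℝ) ^ (1+δ) / ((n:ℝ)+1) ^ (1+δ) :=
        Real.div_rpow hnpos.le hn1.le (1+δ)
      have h6 : 0 < ((n:ℝ)+1) ^ (1+δ) := Real.rpow_pos_of_pos hn1 _
      calc (A + n) * (B + n) / ((C + n) * ((n:ℝ) + 1)) * ((n:ℝ)+1) ^ (1+δ)
          ≤ (1 - (1+δ)/((n:ℝ)+1)) * ((n:ℝ)+1) ^ (1+δ) :=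
            mul_le_mul_of_nonneg_right h2 h6.le
        _ ≤ ((n:ℝ)/((n:ℝ)+1)) ^ (1+δ) * ((n:ℝ)+1) ^ (1+δ) :=
            mul_le_mul_of_nonneg_right h4 h6.le
        _ = (n:ℝ) ^ (1+δ) := by rw [h5]; field_simp
    calc |hypTerm A B C 1 n| * ((A + n) * (B + n) / ((C + n) * ((n:ℝ) + 1))) * ((n:ℝ)+1) ^ (1+δ)
        = |hypTerm A B C 1 n| * ((A + n) * (B + n) / ((C + n) * ((n:ℝ) + 1)) * ((n:ℝ)+1) ^ (1+δ)) := by ring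
      _ ≤ |hypTerm A B C 1 n| * (n:ℝ) ^ (1+δ) :=
          mul_le_mul_of_nonneg_left key (abs_nonneg _)
  refine ⟨|hypTerm A B C 1 N| * (N:ℝ) ^ (1+δ), by positivity, N, hN1, ?_⟩
  have mono : ∀ n, N ≤ n →
      |hypTerm A B C 1 n| * (n:ℝ) ^ (1+δ) ≤ |hypTerm A B C 1 N| * (N:ℝ) ^ (1+δ) := by
    intro n hn
    induction n, hn using Nat.le_induction with
    | base => exact le_refl _
    | succ n hn ih =>
        have := step n hn
        push_cast at this ⊢
        linarith
  intro n hn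
  have hnpos : (0:ℝ) < (n:ℝ) := by
    have : (1:ℕ) ≤ n := le_trans hN1 hn
    exact_mod_cast Nat.lt_of_lt_of_le Nat.zero_lt_one this
  have h6 : 0 < (n:ℝ) ^ (1+δ) := Real.rpow_pos_of_pos hnpos _
  have := mono n hn
  rw [Real.rpow_neg hnpos.le]
  rw [← sub_nonneg] at this ⊢
  have hrw : |hypTerm A B C 1 N| * (N:ℝ)^(1+δ) * ((n:ℝ)^(1+δ))⁻¹ - |hypTerm A B C 1 n|
      = (|hypTerm A B C 1 N| * (N:ℝ)^(1+δ) - |hypTerm A B C 1 n| * (n:ℝ)^(1+δ)) * ((n:ℝ)^(1+δ))⁻¹ := by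
    field_simp
  rw [hrw]
  positivity

lemma hyp_summable (A B C : ℝ) (hr : A + B < C) (hC : ∀ n : ℕ, C ≠ -(n:ℝ)) :
    Summable (hypTerm A B C 1) := by
  obtain ⟨K, hK0, N, hN1, hK⟩ := hyp_decay A B C hr hC
  have hδ : (0:ℝ) < (C-A-B)/2 := by linarith
  refine Summable.of_norm_bounded_eventually_nat (g := fun n => K * (n:ℝ) ^ (-(1 + (C-A-B)/2))) ?_ ?_
  · exact (Real.summable_nat_rpow.2 (by linarith)).mul_left K
  · filter_upwards [eventually_ge_atTop N] with n hn
    simpa [Real.norm_eq_abs] using hK n hn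

lemma hyp_mul_tendsto (A B C : ℝ) (hr : A + B < C) (hC : ∀ n : ℕ, C ≠ -(n:ℝ)) :
    Tendsto (fun n : ℕ => (n:ℝ) * hypTerm A B C 1 n) atTop (𝓝 0) := by
  obtain ⟨K, hK0, N, hN1, hK⟩ := hyp_decay A B C hr hC
  have hδ : (0:ℝ) < (C-A-B)/2 := by linarith
  apply squeeze_zero_norm' (a := fun n : ℕ => K * (n:ℝ) ^ (-((C-A-B)/2)))
  · filter_upwards [eventually_ge_atTop (max N 1)] with n hn
    have hnN : N ≤ n := le_trans (le_max_left _ _) hn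
    have hn1 : 1 ≤ n := le_trans (le_max_right _ _) hn
    have hnpos : (0:ℝ) < (n:ℝ) := by exact_mod_cast Nat.lt_of_lt_of_le Nat.zero_lt_one hn1
    have := hK n hnN
    have h2 : ‖(n:ℝ) * hypTerm A B C 1 n‖ = (n:ℝ) * |hypTerm A B C 1 n| := by
      rw [norm_mul, Real.norm_eq_abs, Real.norm_eq_abs, abs_of_nonneg hnpos.le]
    rw [h2]
    calc (n:ℝ) * |hypTerm A B C 1 n| ≤ (n:ℝ) * (K * (n:ℝ) ^ (-(1 + (C-A-B)/2))) :=
          mul_le_mul_of_nonneg_left this hnpos.le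
      _ = K * (n:ℝ) ^ (-((C-A-B)/2)) := by
          have h3 : (n:ℝ)^(-((C-A-B)/2)) = (n:ℝ)^((1:ℝ) + -(1+(C-A-B)/2)) := by norm_num
          rw [h3, Real.rpow_add hnpos, Real.rpow_one]; ring
  · have : Tendsto (fun n : ℕ => ((n:ℝ)) ^ (-((C-A-B)/2))) atTop (𝓝 0) :=
      (tendsto_rpow_neg_atTop hδ).comp tendsto_natCast_atTop_atTop
    simpa using this.const_mul K

lemma succ_shift (D : ℝ) (hD : ∀ n : ℕ, D ≠ -(n:ℝ)) : ∀ n : ℕ, D + 1 ≠ -(n:ℝ) := by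
  intro n h
  exact hD (n+1) (by push_cast; linarith)

lemma poch_succ_left' (x : ℝ) (n : ℕ) :
    (ascPochhammer ℝ (n+1)).eval x = x * (ascPochhammer ℝ n).eval (x+1) := by
  have h : ∀ (y : ℝ) (m : ℕ), (ascPochhammer ℝ m).eval y = ∏ i ∈ Finset.range m, (y + i) := by
    intro y m
    induction m with
    | zero => simp
    | succ m ih => rw [ascPochhammer_succ_eval, ih, Finset.prod_range_succ]
  rw [h, h, Finset.prod_range_succ']
  simp only [Nat.cast_add, Nat.cast_one, Nat.cast_zero, add_zero]
  rw [mul_comm]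
  congr 1
  exact Finset.prod_congr rfl fun i _ => by push_cast; ring

lemma hyp_rec (A B D : ℝ) (hr : A + B < D) (hD : ∀ n : ℕ, D ≠ -(n:ℝ)) :
    D * (D - A - B) * hyp2F1 A B D 1 = (D - A) * (D - B) * hyp2F1 A B (D+1) 1 := by
  have hD1 : ∀ n : ℕ, D + 1 ≠ -(n:ℝ) := succ_shift D hD
  have hD0 : D ≠ 0 := by simpa using hD 0
  have h1 : Summable (hypTerm A B D 1) := hyp_summable A B D hr hD
  have h2 : Summable (hypTerm A B (D+1) 1) := hyp_summable A B (D+1) (by linarith) hD1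
  set g : ℕ → ℝ := fun n => D * n * hypTerm A B D 1 n with hg
  have tid : ∀ n : ℕ, D * (D - A - B) * hypTerm A B D 1 n
      - (D - A) * (D - B) * hypTerm A B (D+1) 1 n = g n - g (n+1) := by
    intro n
    have hDn : D + (n:ℝ) ≠ 0 := fun h => hD n (by linarith)
    have hc : (ascPochhammer ℝ n).eval D ≠ 0 := poch_ne_zero hD n
    have he : (ascPochhammer ℝ n).eval (D+1) ≠ 0 := poch_ne_zero hD1 n
    have hfac : (n.factorial : ℝ) ≠ 0 := Nat.cast_ne_zero.2 n.factorial_ne_zero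
    have hDe : D * (ascPochhammer ℝ n).eval (D+1)
        = (ascPochhammer ℝ n).eval D * (D + n) := by
      rw [← poch_succ_left', ascPochhammer_succ_eval]
    have he' : (ascPochhammer ℝ n).eval (D+1) = (ascPochhammer ℝ n).eval D * (D + n) / D := by
      field_simp [← hDe]
      linarith [hDe]
    simp only [hg, hypTerm, ascPochhammer_succ_eval, Nat.factorial_succ, one_pow,
      Nat.cast_mul, Nat.cast_add, Nat.cast_one, he']
    have hn1 : ((n:ℝ) + 1) ≠ 0 := by positivity
    field_simp
    ring
  have hsum : Summable (fun n => g n - g (n+1)) :=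
    ((h1.mul_left (D * (D - A - B))).sub (h2.mul_left ((D - A) * (D - B)))).congr tid
  have htel : Tendsto (fun m => ∑ i ∈ Finset.range m, (g i - g (i+1))) atTop (𝓝 0) := by
    have h0 : g 0 = 0 := by simp [hg]
    have hgl : Tendsto g atTop (𝓝 0) := by
      have := (hyp_mul_tendsto A B D hr hD).const_mul D
      simpa [hg, mul_assoc] using this
    have : Tendsto (fun m => g 0 - g m) atTop (𝓝 (g 0 - 0)) := tendsto_const_nhds.sub hgl
    simp only [h0, zero_sub, sub_zero] at this
    refine Tendsto.congr (fun m => ?_) (by simpa using this)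
    rw [Finset.sum_range_sub' g m, h0, zero_sub]
  have hts : ∑' n, (g n - g (n+1)) = 0 :=
    tendsto_nhds_unique hsum.hasSum.tendsto_sum_nat htel
  have hts2 : ∑' n, (D * (D - A - B) * hypTerm A B D 1 n
      - (D - A) * (D - B) * hypTerm A B (D+1) 1 n) = 0 := by
    rw [tsum_congr tid]; exact hts
  rw [Summable.tsum_sub (h1.mul_left _) (h2.mul_left _), tsum_mul_left, tsum_mul_left] at hts2
  unfold hyp2F1
  linarith

lemma poch_le_self {x : ℝ} (hx : 1 ≤ x) (k : ℕ) :
    x ≤ (ascPochhammer ℝ (k+1)).eval x := by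
  rw [poch_prod, Finset.prod_range_succ']
  simp only [Nat.cast_zero, add_zero]
  have h1 : (1:ℝ) ≤ ∏ i ∈ Finset.range k, (x + (i+1 : ℕ)) := by
    calc (1:ℝ) = ∏ _i ∈ Finset.range k, (1:ℝ) := by simp
      _ ≤ ∏ i ∈ Finset.range k, (x + (i+1 : ℕ)) := by
          apply Finset.prod_le_prod (fun i _ => zero_le_one)
          intro i _
          have : (0:ℝ) ≤ (i+1 : ℕ) := Nat.cast_nonneg _
          linarith
  nlinarith [h1]

lemma pos_shift (C : ℝ) (hCpos : 0 < C) : ∀ n : ℕ, C ≠ -(n:ℝ) := by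
  intro n h
  have : (0:ℝ) ≤ (n:ℝ) := Nat.cast_nonneg _
  linarith

lemma hyp_tendsto_one (A B C : ℝ) (hr : A + B < C) (hCint : ∀ n : ℕ, C ≠ -(n:ℝ)) :
    Tendsto (fun m : ℕ => hyp2F1 A B (C + m) 1) atTop (𝓝 1) := by
  set a : ℝ := max |A| |B| with ha
  have haA : |A| ≤ a := le_max_left _ _
  have haB : |B| ≤ a := le_max_right _ _
  have ha0 : 0 ≤ a := le_trans (abs_nonneg A) haA
  obtain ⟨m0, hm0⟩ := exists_nat_gt (2*a + 2 - C)
  have hCm0 : 2*a + 2 < C + m0 := by linarith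
  have hCm0pos : (0:ℝ) < C + m0 := by linarith
  have hCmint : ∀ m : ℕ, ∀ n : ℕ, C + (m:ℝ) ≠ -(n:ℝ) := by
    intro m n h
    exact hCint (n + m) (by push_cast; linarith)
  have hCm : ∀ m : ℕ, A + B < C + m := fun m => by
    have : (0:ℝ) ≤ (m:ℝ) := Nat.cast_nonneg _; linarith
  -- summability of each series
  have hsumm : ∀ m : ℕ, Summable (hypTerm A B (C + m) 1) :=
    fun m => hyp_summable A B (C+m) (hCm m) (hCmint m)
  -- the bound
  set bound : ℕ → ℝ := fun k => hypTerm a a (C + m0) 1 (k+1) with hbd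
  have hbound_sum : Summable bound := by
    have := hyp_summable a a (C + m0) (by linarith) (pos_shift _ hCm0pos)
    exact (summable_nat_add_iff 1).2 this
  -- key tendsto via dominated convergence
  have key : Tendsto (fun m : ℕ => ∑' k : ℕ, hypTerm A B (C + m) 1 (k+1)) atTop
      (𝓝 (∑' _ : ℕ, (0:ℝ))) := by
    apply tendsto_tsum_of_dominated_convergence hbound_sum
    · -- pointwise tendsto to 0
      intro k
      apply squeeze_zero_norm'
        (a := fun m : ℕ => ((ascPochhammer ℝ (k+1)).eval a)^2 / (k+1).factorial * (C + m)⁻¹)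
      · filter_upwards [eventually_gt_atTop (Nat.ceil (1 - C) + 1)] with m hm
        have hCm1 : (1:ℝ) ≤ C + m := by
          have h1 : (1:ℝ) - C ≤ (Nat.ceil (1 - C) : ℝ) := Nat.le_ceil _
          have h2 : ((Nat.ceil (1 - C) + 1 : ℕ) : ℝ) ≤ (m:ℝ) := Nat.cast_le.2 hm.le
          push_cast at h2
          linarith
        have hp : 0 < (ascPochhammer ℝ (k+1)).eval (C + m) := poch_pos (by linarith) _
        have hfac : (0:ℝ) < ((k+1).factorial : ℝ) := by positivity
        have hnum : |(ascPochhammer ℝ (k+1)).eval A * (ascPochhammer ℝ (k+1)).eval B|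
            ≤ ((ascPochhammer ℝ (k+1)).eval a)^2 := by
          rw [abs_mul, sq]
          exact mul_le_mul (poch_abs_le haA _) (poch_abs_le haB _) (abs_nonneg _)
            (le_trans (abs_nonneg _) (poch_abs_le haA _))
        have hden : C + m ≤ (ascPochhammer ℝ (k+1)).eval (C + m) := poch_le_self hCm1 _
        have hCmpos : (0:ℝ) < C + m := by linarith
        rw [Real.norm_eq_abs]
        simp only [hypTerm, one_pow, mul_one]
        rw [abs_div, abs_div, abs_of_pos hp, abs_of_pos hfac, div_div]
        calc |(ascPochhammer ℝ (k+1)).eval A * (ascPochhammer ℝ (k+1)).eval B|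
              / ((ascPochhammer ℝ (k+1)).eval (C+m) * ((k+1).factorial : ℝ))
            ≤ ((ascPochhammer ℝ (k+1)).eval a)^2 / ((C+m) * ((k+1).factorial : ℝ)) :=
              div_le_div₀ (sq_nonneg _) hnum (by positivity)
                (mul_le_mul_of_nonneg_right hden hfac.le)
          _ = ((ascPochhammer ℝ (k+1)).eval a)^2 / ((k+1).factorial : ℝ) * (C+m)⁻¹ := by
              rw [mul_comm (C+(m:ℝ)), ← div_div, div_eq_mul_inv]
      · have h1 : Tendsto (fun m : ℕ => C + (m:ℝ)) atTop atTop :=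
          tendsto_atTop_add_const_left atTop C tendsto_natCast_atTop_atTop
        have h2 : Tendsto (fun m : ℕ => (C + (m:ℝ))⁻¹) atTop (𝓝 0) := h1.inv_tendsto_atTop
        simpa using h2.const_mul (((ascPochhammer ℝ (k+1)).eval a)^2 / ((k+1).factorial : ℝ))
    · -- uniform bound
      filter_upwards [eventually_ge_atTop m0] with m hm k
      have hmm : (m0:ℝ) ≤ (m:ℝ) := Nat.cast_le.2 hm
      have hp0 : 0 < (ascPochhammer ℝ (k+1)).eval (C + m0) := poch_pos (by linarith) _
      have hpm : (ascPochhammer ℝ (k+1)).eval (C + m0) ≤ (ascPochhammer ℝ (k+1)).eval (C + m) :=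
        poch_mono hCm0pos.le (by linarith) _
      have hfac : (0:ℝ) < ((k+1).factorial : ℝ) := by positivity
      have hnum : |(ascPochhammer ℝ (k+1)).eval A * (ascPochhammer ℝ (k+1)).eval B|
          ≤ (ascPochhammer ℝ (k+1)).eval a * (ascPochhammer ℝ (k+1)).eval a := by
        rw [abs_mul]
        exact mul_le_mul (poch_abs_le haA _) (poch_abs_le haB _) (abs_nonneg _)
          (le_trans (abs_nonneg _) (poch_abs_le haA _))
      have hpmpos : 0 < (ascPochhammer ℝ (k+1)).eval (C + m) := lt_of_lt_of_le hp0 hpm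
      rw [Real.norm_eq_abs]
      simp only [hypTerm, hbd, one_pow, mul_one]
      rw [abs_div, abs_div, abs_of_pos hpmpos, abs_of_pos hfac, div_div, div_div]
      exact div_le_div₀ (mul_self_nonneg _) hnum (by positivity)
        (mul_le_mul_of_nonneg_right hpm hfac.le)
  -- conclude
  have hrw : ∀ m : ℕ, hyp2F1 A B (C + m) 1 = 1 + ∑' k : ℕ, hypTerm A B (C + m) 1 (k+1) := by
    intro m
    unfold hyp2F1
    rw [Summable.tsum_eq_zero_add (hsumm m), hypTerm_zero]
  have hfin : Tendsto (fun m : ℕ => 1 + ∑' k : ℕ, hypTerm A B (C + m) 1 (k+1)) atTop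
      (𝓝 (1 + ∑' _ : ℕ, (0:ℝ))) := tendsto_const_nhds.add key
  simp only [tsum_zero, add_zero] at hfin
  exact Tendsto.congr (fun m => (hrw m).symm) hfin

lemma ratio_helper (qa qb qc qd x1 x2 x3 x4 F : ℝ)
    (h3 : x3 ≠ 0) (h4 : x4 ≠ 0) (hF : F ≠ 0)
    (hpow : x1 * x2 = x3 * x4) :
    qa * qb / (qc * qd) = (x1*F/qc) * (x2*F/qd) / ((x3*F/qa)*(x4*F/qb)) := by
  rw [div_mul_div_comm, div_mul_div_comm, div_div_div_comm]
  rw [show x1*F*(x2*F) = x1*x2*(F*F) by ring, hpow]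
  rw [div_div_eq_mul_div, div_mul_eq_mul_div]
  rw [show x3*x4*(F*F) = x3*F*(x4*F) by ring]
  rw [mul_comm (x3*F*(x4*F)) (qa*qb),
    mul_div_cancel_right₀ _ (mul_ne_zero (mul_ne_zero h3 hF) (mul_ne_zero h4 hF))]

/-- Gauss summation: ₂F₁(A,B,C;1) = Γ(C)Γ(C−A−B)/(Γ(C−A)Γ(C−B)). -/
theorem gauss_summation (A B C : ℝ) (hC : C > A + B)
    (hCint : ∀ n : ℕ, C ≠ -(n : ℝ)) :
    hyp2F1 A B C 1 =
      Real.Gamma C * Real.Gamma (C - A - B) /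
        (Real.Gamma (C - A) * Real.Gamma (C - B)) := by
  have hCm : ∀ m : ℕ, A + B < C + m := fun m => by
    have : (0:ℝ) ≤ (m:ℝ) := Nat.cast_nonneg _; linarith
  have hCmint : ∀ m : ℕ, ∀ n : ℕ, C + (m:ℝ) ≠ -(n:ℝ) := by
    intro m n h
    exact hCint (n + m) (by push_cast; linarith)
  set P : ℕ → ℝ :=
    fun m => ∏ j ∈ Finset.range m, ((C-A+j)*(C-B+j)/((C+j)*(C-A-B+j))) with hPdef
  have hFP : ∀ m : ℕ, hyp2F1 A B C 1 = P m * hyp2F1 A B (C + m) 1 := by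
    intro m
    induction m with
    | zero => simp [hPdef]
    | succ m ih =>
      have hrec := hyp_rec A B (C+m) (hCm m) (hCmint m)
      have hne1 : (C+(m:ℝ)) ≠ 0 := by
        have := hCmint m 0; simpa using this
      have hne2 : C+(m:ℝ)-A-B ≠ 0 := by have := hCm m; intro h; linarith
      have hF : hyp2F1 A B (C+(m:ℝ)) 1
          = (C+(m:ℝ)-A)*(C+(m:ℝ)-B)/((C+(m:ℝ))*(C+(m:ℝ)-A-B)) * hyp2F1 A B (C+(m:ℝ)+1) 1 := by
        field_simp
        linear_combination hrec
      have hcast : C + ((m+1:ℕ):ℝ) = C + (m:ℝ) + 1 := by push_cast; ring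
      rw [hcast, ih, hF]
      simp only [hPdef]
      rw [Finset.prod_range_succ]
      ring
  have hT1 := hyp_tendsto_one A B C hC hCint
  have hev : ∀ᶠ m in atTop, hyp2F1 A B (C + (m:ℕ)) 1 ≠ 0 := hT1.eventually_ne one_ne_zero
  have hPl : Tendsto P atTop (𝓝 (hyp2F1 A B C 1)) := by
    have h1 : Tendsto (fun m : ℕ => hyp2F1 A B C 1 / hyp2F1 A B (C+m) 1) atTop
        (𝓝 (hyp2F1 A B C 1 / 1)) := tendsto_const_nhds.div hT1 one_ne_zero
    rw [div_one] at h1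
    refine h1.congr' ?_
    filter_upwards [hev] with m hm
    rw [hFP m, mul_div_assoc, div_self hm, mul_one]
  by_cases hdeg : (∃ k : ℕ, C - A = -(k:ℝ)) ∨ (∃ k : ℕ, C - B = -(k:ℝ))
  · have hrhs : Real.Gamma (C-A) * Real.Gamma (C-B) = 0 := by
      rcases hdeg with ⟨k,hk⟩|⟨k,hk⟩
      · rw [(Real.Gamma_eq_zero_iff _).2 ⟨k,hk⟩, zero_mul]
      · rw [(Real.Gamma_eq_zero_iff _).2 ⟨k,hk⟩, mul_zero]
    rw [hrhs, div_zero]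
    obtain ⟨k, hk⟩ : ∃ k : ℕ, (C-A+(k:ℝ) = 0) ∨ (C-B+(k:ℝ) = 0) := by
      rcases hdeg with ⟨k,hk⟩|⟨k,hk⟩
      · exact ⟨k, Or.inl (by linarith)⟩
      · exact ⟨k, Or.inr (by linarith)⟩
    have hP0 : ∀ m, k < m → P m = 0 := by
      intro m hm
      apply Finset.prod_eq_zero (Finset.mem_range.2 hm)
      rcases hk with h|h
      · rw [h, zero_mul, zero_div]
      · rw [h, mul_zero, zero_div]
    have hz : Tendsto P atTop (𝓝 0) := by
      refine Tendsto.congr' ?_ (tendsto_const_nhds (x := (0:ℝ)))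
      filter_upwards [eventually_gt_atTop k] with m hm
      exact (hP0 m hm).symm
    exact tendsto_nhds_unique hPl hz
  · push_neg at hdeg
    obtain ⟨hA', hB'⟩ := hdeg
    have hGA : Real.Gamma (C-A) ≠ 0 := Real.Gamma_ne_zero hA'
    have hGB : Real.Gamma (C-B) ≠ 0 := Real.Gamma_ne_zero hB'
    have hPe : ∀ m : ℕ, 1 ≤ m → P (m+1) =
        Real.GammaSeq C m * Real.GammaSeq (C-A-B) m
          / (Real.GammaSeq (C-A) m * Real.GammaSeq (C-B) m) := by
      intro m hm
      have hmpos : (0:ℝ) < (m:ℝ) := by exact_mod_cast hm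
      have hfac : ((m.factorial : ℝ)) ≠ 0 := Nat.cast_ne_zero.2 m.factorial_ne_zero
      have hQ : ∀ x : ℝ, (∀ n : ℕ, x ≠ -(n:ℝ)) → ∏ j ∈ Finset.range (m+1), (x + (j:ℝ)) ≠ 0 := by
        intro x hx
        exact Finset.prod_ne_zero_iff.2 fun j _ => fun h => hx j (by linarith)
      have hCAB : ∀ n : ℕ, C - A - B ≠ -(n:ℝ) := by
        intro n h
        have : (0:ℝ) ≤ (n:ℝ) := Nat.cast_nonneg _
        linarith
      have hA'' : ∀ n : ℕ, C - A ≠ -(n:ℝ) := hA'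
      have hQC := hQ C hCint
      have hQD := hQ (C-A-B) hCAB
      have hQA := hQ (C-A) hA'
      have hQB := hQ (C-B) hB'
      have hpow : (m:ℝ)^C * (m:ℝ)^(C-A-B) = (m:ℝ)^(C-A) * (m:ℝ)^(C-B) := by
        rw [← Real.rpow_add hmpos, ← Real.rpow_add hmpos]
        congr 1
        ring
      have hPexp : P (m+1) = (∏ j ∈ Finset.range (m+1), (C-A+(j:ℝ)))
          * (∏ j ∈ Finset.range (m+1), (C-B+(j:ℝ)))
          / ((∏ j ∈ Finset.range (m+1), (C+(j:ℝ)))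
          * (∏ j ∈ Finset.range (m+1), (C-A-B+(j:ℝ)))) := by
        rw [hPdef]
        rw [← Finset.prod_mul_distrib, ← Finset.prod_mul_distrib, ← Finset.prod_div_distrib]
      have hx3 : (m:ℝ)^(C-A) ≠ 0 := ne_of_gt (Real.rpow_pos_of_pos hmpos _)
      have hx4 : (m:ℝ)^(C-B) ≠ 0 := ne_of_gt (Real.rpow_pos_of_pos hmpos _)
      rw [hPexp]
      unfold Real.GammaSeq
      exact ratio_helper _ _ _ _ _ _ _ _ _ hx3 hx4 hfac hpow
    have hlim2 : Tendsto (fun m : ℕ => P (m+1)) atTop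
        (𝓝 (Real.Gamma C * Real.Gamma (C-A-B) / (Real.Gamma (C-A) * Real.Gamma (C-B)))) := by
      refine Tendsto.congr' ?_ (((Real.GammaSeq_tendsto_Gamma C).mul
        (Real.GammaSeq_tendsto_Gamma (C-A-B))).div
        (((Real.GammaSeq_tendsto_Gamma (C-A)).mul (Real.GammaSeq_tendsto_Gamma (C-B))))
        (mul_ne_zero hGA hGB))
      filter_upwards [eventually_ge_atTop 1] with m hm
      exact (hPe m hm).symm
    have hlim1 : Tendsto (fun m : ℕ => P (m+1)) atTop (𝓝 (hyp2F1 A B C 1)) :=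
      hPl.comp (tendsto_add_atTop_nat 1)
    exact tendsto_nhds_unique hlim1 hlim2
end

section
/- (Euler transformation) For real parameters A, B, C with C not a nonpositive integer, one has ₂F₁(A,B,C;z) = (1−z)^{C−A−B} ₂F₁(C−A, C−B, C; z) for all z ∈ [0,1). -/
open Polynomial Set Filter
set_option maxHeartbeats 1600000


namespace EulerHyp

noncomputable def pch (x : ℝ) (k : ℕ) : ℝ := (ascPochhammer ℝ k).eval x

lemma pch_zero (x : ℝ) : pch x 0 = 1 := by simp [pch]

lemma pch_succ (x : ℝ) (k : ℕ) : pch x (k + 1) = pch x k * (x + k) :=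
  ascPochhammer_succ_eval k x

lemma pch_succ_left (x : ℝ) (k : ℕ) : pch x (k + 1) = x * pch (x + 1) k := by
  simp [pch, ascPochhammer_succ_left, eval_comp]

lemma pch_one (k : ℕ) : pch 1 k = k.factorial := by
  simp [pch, ascPochhammer_eval_one]

lemma pch_ne_zero {C : ℝ} (hC : ∀ k : ℕ, C + (k : ℝ) ≠ 0) (k : ℕ) : pch C k ≠ 0 := by
  induction k with
  | zero => simp [pch_zero]
  | succ k ih => rw [pch_succ]; exact mul_ne_zero ih (hC k)

noncomputable def bb (A B C : ℝ) (k : ℕ) : ℝ :=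
  pch (C - A) k * pch (C - B) k / (pch C k * k.factorial)

noncomputable def dd (A B C : ℝ) (m : ℕ) : ℝ := pch (A + B - C) m / m.factorial

lemma bb_succ {A B C : ℝ} (hC : ∀ k : ℕ, C + (k : ℝ) ≠ 0) (k : ℕ) :
    ((k : ℝ) + 1) * bb A B C (k + 1) = bb A B C k * ((C - A + k) * (C - B + k) / (C + k)) := by
  have h1 : pch C k ≠ 0 := pch_ne_zero hC k
  have h2 := hC k
  have h3 : (k.factorial : ℝ) ≠ 0 := Nat.cast_ne_zero.mpr k.factorial_ne_zero
  have h4 : ((k : ℝ) + 1) ≠ 0 := by positivity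
  simp only [bb, pch_succ, Nat.factorial_succ, Nat.cast_mul, Nat.cast_add, Nat.cast_one]
  field_simp

lemma dd_succ {A B C : ℝ} (m : ℕ) :
    ((m : ℝ) + 1) * dd A B C (m + 1) = (A + B - C + m) * dd A B C m := by
  have h3 : (m.factorial : ℝ) ≠ 0 := Nat.cast_ne_zero.mpr m.factorial_ne_zero
  have h4 : ((m : ℝ) + 1) ≠ 0 := by positivity
  simp only [dd, pch_succ, Nat.factorial_succ, Nat.cast_mul, Nat.cast_add, Nat.cast_one]
  field_simp

lemma cert {A B C x m X Y X' Y' : ℝ} (hCx : C + x ≠ 0) (hCxm : C + (x + m) ≠ 0)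
    (hX' : (x + 1) * X' = X * ((C - A + x) * (C - B + x) / (C + x)))
    (hY' : (m + 1) * Y' = (A + B - C + m) * Y) :
    X * ((C - A + x) * (C - B + x) / (C + x)) * Y + (A + B - C + m) * Y * X
      = (A + (x + m)) * (B + (x + m)) / (C + (x + m)) * (X * Y)
        + ((x + 1) * m * X' * Y / (C + (x + m)) - x * (m + 1) * X * Y' / (C + (x + m))) := by
  have h1 : (x + 1) * m * X' * Y / (C + (x + m)) = m * ((x + 1) * X') * Y / (C + (x + m)) := by
    ring
  have h2 : x * (m + 1) * X * Y' / (C + (x + m)) = x * X * ((m + 1) * Y') / (C + (x + m)) := by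
    ring
  rw [h1, hX', h2, hY']
  field_simp
  ring

lemma saal {A B C : ℝ} (hC : ∀ k : ℕ, C + (k : ℝ) ≠ 0) (n : ℕ) :
    ∑ k ∈ Finset.range (n + 1), bb A B C k * dd A B C (n - k)
      = pch A n * pch B n / (pch C n * n.factorial) := by
  induction n with
  | zero => simp [bb, dd, pch_zero]
  | succ n ih =>
    have hpch : ∀ k, pch C k ≠ 0 := pch_ne_zero hC
    have hCn := hC n
    have hn1 : ((n : ℝ) + 1) ≠ 0 := by positivity
    set φ : ℕ → ℝ := fun k =>
      (k : ℝ) * ((n + 1 - k : ℕ) : ℝ) * bb A B C k * dd A B C (n + 1 - k) / (C + n) with hφ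
    have step1 : ((n : ℝ) + 1) * ∑ k ∈ Finset.range (n + 2), bb A B C k * dd A B C (n + 1 - k)
        = (∑ k ∈ Finset.range (n + 1),
            (((k : ℝ) + 1) * bb A B C (k + 1)) * dd A B C (n - k))
          + ∑ k ∈ Finset.range (n + 1),
            (((n - k : ℕ) : ℝ) + 1) * dd A B C ((n - k) + 1) * bb A B C k := by
      rw [Finset.mul_sum]
      have hsplit : ∀ k ∈ Finset.range (n + 2),
          ((n : ℝ) + 1) * (bb A B C k * dd A B C (n + 1 - k))
            = (k : ℝ) * (bb A B C k * dd A B C (n + 1 - k))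
              + ((n + 1 - k : ℕ) : ℝ) * (bb A B C k * dd A B C (n + 1 - k)) := by
        intro k hk
        have hk' : k ≤ n + 1 := by simpa [Nat.lt_succ_iff] using Finset.mem_range.mp hk
        have : ((n + 1 - k : ℕ) : ℝ) = (n : ℝ) + 1 - k := by
          push_cast [Nat.cast_sub hk']
          ring
        rw [this]; ring
      rw [Finset.sum_congr rfl hsplit, Finset.sum_add_distrib]
      congr 1
      · rw [Finset.sum_range_succ' _ (n + 1)]
        simp only [Nat.cast_zero, zero_mul, add_zero, Nat.succ_sub_succ]
        exact Finset.sum_congr rfl fun k _ => by push_cast; ring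
      · rw [Finset.sum_range_succ]
        simp only [Nat.sub_self, Nat.cast_zero, zero_mul, mul_zero, add_zero]
        refine Finset.sum_congr rfl fun k hk => ?_
        have hk' : k ≤ n := by simpa [Nat.lt_succ_iff] using Finset.mem_range.mp hk
        have h1 : n + 1 - k = (n - k) + 1 := by omega
        rw [h1]; push_cast; ring
    have step2 : ∑ k ∈ Finset.range (n + 1), (((k : ℝ) + 1) * bb A B C (k + 1)) * dd A B C (n - k)
        = ∑ k ∈ Finset.range (n + 1),
            bb A B C k * ((C - A + k) * (C - B + k) / (C + k)) * dd A B C (n - k) :=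
      Finset.sum_congr rfl fun k _ => by rw [bb_succ hC k]
    have step3 : ∑ k ∈ Finset.range (n + 1),
          (((n - k : ℕ) : ℝ) + 1) * dd A B C ((n - k) + 1) * bb A B C k
        = ∑ k ∈ Finset.range (n + 1),
            (A + B - C + ((n - k : ℕ) : ℝ)) * dd A B C (n - k) * bb A B C k :=
      Finset.sum_congr rfl fun k _ => by rw [dd_succ]
    have key : ∀ k ∈ Finset.range (n + 1),
        bb A B C k * ((C - A + k) * (C - B + k) / (C + k)) * dd A B C (n - k)
          + (A + B - C + ((n - k : ℕ) : ℝ)) * dd A B C (n - k) * bb A B C k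
        = (A + (n : ℝ)) * (B + (n : ℝ)) / (C + (n : ℝ)) * (bb A B C k * dd A B C (n - k))
          + (φ (k + 1) - φ k) := by
      intro k hk
      have hk' : k ≤ n := by simpa [Nat.lt_succ_iff] using Finset.mem_range.mp hk
      obtain ⟨m, rfl⟩ := Nat.exists_eq_add_of_le hk'
      have i1 : k + m - k = m := by omega
      have i2 : k + m + 1 - (k + 1) = m := by omega
      have i3 : k + m + 1 - k = m + 1 := by omega
      have hCk := hC k
      have hCkm : C + ((k : ℝ) + (m : ℝ)) ≠ 0 := by
        have := hC (k + m); push_cast at this; exact this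
      simp only [hφ, i1, i2, i3]
      push_cast
      exact cert hCk hCkm (bb_succ hC k) (dd_succ m)
    have tele : ∑ k ∈ Finset.range (n + 1), (φ (k + 1) - φ k) = 0 := by
      rw [Finset.sum_range_sub φ (n + 1)]
      simp [hφ, Nat.sub_self]
    have hS : ((n : ℝ) + 1) * ∑ k ∈ Finset.range (n + 2), bb A B C k * dd A B C (n + 1 - k)
        = (A + (n : ℝ)) * (B + (n : ℝ)) / (C + (n : ℝ))
            * (pch A n * pch B n / (pch C n * n.factorial)) := by
      rw [step1, step2, step3, ← Finset.sum_add_distrib, Finset.sum_congr rfl key,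
        Finset.sum_add_distrib, tele, add_zero, ← Finset.mul_sum, ih]
    have hfac : (n.factorial : ℝ) ≠ 0 := Nat.cast_ne_zero.mpr n.factorial_ne_zero
    have hRn : pch C n ≠ 0 := hpch n
    apply mul_left_cancel₀ hn1
    rw [hS, pch_succ, pch_succ, pch_succ, Nat.factorial_succ]
    push_cast
    generalize pch A n = P
    generalize pch B n = Q
    generalize pch C n = R at hRn ⊢
    generalize (n.factorial : ℝ) = F at hfac ⊢
    field_simp

noncomputable def hypTermX (A B C z : ℝ) (n : ℕ) : ℝ :=
  pch A n * pch B n / pch C n * z ^ n / n.factorial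

lemma hypTermX_succ (A B C z : ℝ) (hC : ∀ k : ℕ, C + (k : ℝ) ≠ 0) (n : ℕ) :
    hypTermX A B C z (n + 1)
      = hypTermX A B C z n * ((A + n) * (B + n) * z / ((C + n) * ((n : ℝ) + 1))) := by
  have h1 : pch C n ≠ 0 := pch_ne_zero hC n
  have h2 := hC n
  have h3 : (n.factorial : ℝ) ≠ 0 := Nat.cast_ne_zero.mpr n.factorial_ne_zero
  have h4 : ((n : ℝ) + 1) ≠ 0 := by positivity
  simp only [hypTermX, pch_succ, Nat.factorial_succ, pow_succ, Nat.cast_mul, Nat.cast_add,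
    Nat.cast_one]
  field_simp

lemma summable_norm_hypTermX (A B C z : ℝ) (hC : ∀ k : ℕ, C + (k : ℝ) ≠ 0) (hz : |z| < 1) :
    Summable fun n => ‖hypTermX A B C z n‖ := by
  have hr1 : (1 + |z|) / 2 < 1 := by linarith
  have hzr : |z| < (1 + |z|) / 2 := by linarith [abs_nonneg z]
  have hq : Tendsto (fun n : ℕ => |(A + n) * (B + n) * z / ((C + n) * ((n : ℝ) + 1))|)
      atTop (nhds |z|) := by
    have hA : Tendsto (fun n : ℕ => (A + (n : ℝ)) / ((n : ℝ) + 1)) atTop (nhds 1) := by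
      have h0 : Tendsto (fun n : ℕ => (A - 1) / ((n : ℝ) + 1) + 1) atTop (nhds (0 + 1)) :=
        (Tendsto.div_atTop tendsto_const_nhds
          (tendsto_atTop_add_const_right _ 1 tendsto_natCast_atTop_atTop)).add tendsto_const_nhds
      rw [zero_add] at h0
      refine h0.congr fun n => ?_
      have hn : ((n : ℝ) + 1) ≠ 0 := by positivity
      field_simp
      ring
    have hB : Tendsto (fun n : ℕ => (B + (n : ℝ)) / (C + (n : ℝ))) atTop (nhds 1) := by
      have h0 : Tendsto (fun n : ℕ => (B - C) / (C + (n : ℝ)) + 1) atTop (nhds (0 + 1)) :=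
        (Tendsto.div_atTop tendsto_const_nhds
          (tendsto_atTop_add_const_left _ C tendsto_natCast_atTop_atTop)).add tendsto_const_nhds
      rw [zero_add] at h0
      refine h0.congr fun n => ?_
      have hn : C + (n : ℝ) ≠ 0 := hC n
      field_simp
      ring
    have h1 : Tendsto (fun n : ℕ =>
        (A + (n : ℝ)) / ((n : ℝ) + 1) * ((B + (n : ℝ)) / (C + (n : ℝ))) * z)
        atTop (nhds (1 * 1 * z)) := (hA.mul hB).mul_const z
    rw [one_mul, one_mul] at h1
    refine h1.abs.congr fun n => ?_
    congr 1
    rw [div_mul_div_comm, div_mul_eq_mul_div, mul_comm ((n : ℝ) + 1) (C + (n : ℝ))]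
  have hev : ∀ᶠ n in atTop, ‖hypTermX A B C z (n + 1)‖
      ≤ (1 + |z|) / 2 * ‖hypTermX A B C z n‖ := by
    filter_upwards [hq.eventually_lt_const hzr] with n hn
    rw [hypTermX_succ A B C z hC n, norm_mul]
    rw [mul_comm]
    refine mul_le_mul_of_nonneg_right ?_ (norm_nonneg _)
    rw [Real.norm_eq_abs]
    exact le_of_lt hn
  refine summable_of_ratio_norm_eventually_le hr1 ?_
  simpa using hev

lemma hypTermX_one_one (a z : ℝ) (m : ℕ) :
    hypTermX a 1 1 z m = pch a m * z ^ m / m.factorial := by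
  have h : pch 1 m ≠ 0 := by
    rw [pch_one]; exact Nat.cast_ne_zero.mpr m.factorial_ne_zero
  have hf : (m.factorial : ℝ) ≠ 0 := Nat.cast_ne_zero.mpr m.factorial_ne_zero
  simp only [hypTermX]
  field_simp

lemma binom_hasSum (s : ℝ) {z : ℝ} (hz0 : 0 ≤ z) (hz1 : z < 1) :
    HasSum (fun m : ℕ => pch s m * z ^ m / m.factorial) ((1 - z) ^ (-s)) := by
  have hone : ∀ k : ℕ, (1 : ℝ) + (k : ℝ) ≠ 0 := fun k => by positivity
  rcases eq_or_lt_of_le hz0 with h0 | h0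
  · rw [← h0]
    have h1 := hasSum_single (f := fun m : ℕ => pch s m * (0 : ℝ) ^ m / m.factorial) 0
      (by intro m hm; simp [zero_pow hm])
    simpa [pch_zero] using h1
  · set r : ℝ := (1 + z) / 2 with hr
    have hr0 : 0 < r := by rw [hr]; linarith
    have hr1 : r < 1 := by rw [hr]; linarith
    have hzr : z < r := by rw [hr]; linarith
    have hrabs : |r| < 1 := by rw [abs_of_pos hr0]; exact hr1
    set g : ℕ → ℝ → ℝ := fun m y => pch s m * y ^ m / m.factorial with hg
    set g' : ℕ → ℝ → ℝ := fun m y => pch s m * ((m : ℝ) * y ^ (m - 1)) / m.factorial with hg'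
    set u : ℕ → ℝ := fun m => |pch s m| * ((m : ℝ) * r ^ (m - 1)) / m.factorial with hu
    have hderiv : ∀ (m : ℕ) (y : ℝ), HasDerivAt (g m) (g' m y) y := fun m y =>
      ((hasDerivAt_pow m y).const_mul (pch s m)).div_const _
    have hbound : ∀ (m : ℕ) (y : ℝ), y ∈ Ioo (-r) r → ‖g' m y‖ ≤ u m := by
      intro m y hy
      have hy' : |y| ≤ r := le_of_lt (abs_lt.mpr ⟨hy.1, hy.2⟩)
      simp only [hg', hu, Real.norm_eq_abs, abs_div, abs_mul, abs_pow, Nat.abs_cast]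
      gcongr
      all_goals first
        | exact abs_nonneg y
        | exact hy'
        | positivity
    have husum : Summable u := by
      rw [← summable_nat_add_iff 1]
      refine Summable.congr
        (((summable_norm_hypTermX (s + 1) 1 1 r hone hrabs).mul_left |s|)) fun m => ?_
      have hm1 : ((m + 1 : ℕ) : ℝ) ≠ 0 := Nat.cast_ne_zero.mpr (Nat.succ_ne_zero m)
      have hf : (m.factorial : ℝ) ≠ 0 := Nat.cast_ne_zero.mpr m.factorial_ne_zero
      rw [hypTermX_one_one, Real.norm_eq_abs, abs_div, abs_mul, abs_pow, abs_of_pos hr0,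
        Nat.abs_cast]
      simp only [hu, pch_succ_left, Nat.factorial_succ, Nat.add_sub_cancel, abs_mul,
        Nat.cast_mul, Nat.abs_cast]
      field_simp
    have hIooOpen : IsOpen (Ioo (-r) r) := isOpen_Ioo
    have hIooConn : IsPreconnected (Ioo (-r) r) := (convex_Ioo (-r) r).isPreconnected
    have h0mem : (0 : ℝ) ∈ Ioo (-r) r := ⟨by linarith, hr0⟩
    have hzmem : z ∈ Ioo (-r) r := ⟨by linarith, hzr⟩
    have hg0 : Summable fun m => g m 0 := by
      refine summable_of_ne_finset_zero (s := {0}) ?_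
      intro m hm
      have : m ≠ 0 := by simpa using hm
      simp [hg, zero_pow this]
    have hF : ∀ y ∈ Ioo (-r) r, HasDerivAt (fun w => ∑' m, g m w) (∑' m, g' m y) y :=
      fun y hy => hasDerivAt_tsum_of_isPreconnected husum hIooOpen hIooConn
        (fun m w _ => hderiv m w) hbound h0mem hg0 hy
    have habsy : ∀ y ∈ Ioo (-r) r, |y| < 1 := fun y hy =>
      lt_trans (abs_lt.mpr ⟨hy.1, hy.2⟩) hr1
    have hgysum : ∀ y ∈ Ioo (-r) r, Summable fun m => g m y := fun y hy =>
      ((summable_norm_hypTermX s 1 1 y hone (habsy y hy)).of_norm).congr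
        (fun m => by rw [hypTermX_one_one])
    have hg'sum : ∀ y ∈ Ioo (-r) r, Summable fun m => g' m y := fun y hy =>
      Summable.of_norm_bounded husum (fun m => hbound m y hy)
    have hkey : ∀ y ∈ Ioo (-r) r, (1 - y) * (∑' m, g' m y) = s * ∑' m, g m y := by
      intro y hy
      have hy1 : |y| < 1 := habsy y hy
      have hEsum : Summable fun m => pch s (m + 1) * y ^ m / m.factorial :=
        (((summable_norm_hypTermX (s + 1) 1 1 y hone hy1).of_norm).mul_left s).congr
          (fun m => by rw [hypTermX_one_one, pch_succ_left]; ring)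
      have hS2 : Summable fun m : ℕ => (m : ℝ) * (pch s m * y ^ m / m.factorial) := by
        refine ((hg'sum y hy).mul_left y).congr fun m => ?_
        cases m with
        | zero => simp [hg']
        | succ m =>
          simp only [hg', Nat.add_sub_cancel]
          push_cast
          ring
      have ha : (∑' m, g' m y) = ∑' m, pch s (m + 1) * y ^ m / m.factorial := by
        rw [Summable.tsum_eq_zero_add (hg'sum y hy)]
        have h00 : g' 0 y = 0 := by simp [hg']
        rw [h00, zero_add]
        refine tsum_congr fun m => ?_
        have hm1 : ((m : ℝ) + 1) ≠ 0 := by positivity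
        have hf : (m.factorial : ℝ) ≠ 0 := Nat.cast_ne_zero.mpr m.factorial_ne_zero
        simp only [hg', Nat.add_sub_cancel, Nat.factorial_succ]
        push_cast
        field_simp
      have hb : y * (∑' m, g' m y) = ∑' m : ℕ, (m : ℝ) * (pch s m * y ^ m / m.factorial) := by
        rw [← tsum_mul_left]
        refine tsum_congr fun m => ?_
        cases m with
        | zero => simp [hg']
        | succ m =>
          simp only [hg', Nat.add_sub_cancel]
          push_cast
          ring
      have hc : (1 - y) * (∑' m, g' m y) = (∑' m, g' m y) - y * (∑' m, g' m y) := by ring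
      rw [hc, hb, ha, ← Summable.tsum_sub hEsum hS2, ← tsum_mul_left]
      refine tsum_congr fun m => ?_
      rw [pch_succ]
      simp only [hg]
      ring
    have hH : ∀ y ∈ Ioo (-r) r, HasDerivAt (fun w => (1 - w) ^ s * ∑' m, g m w) 0 y := by
      intro y hy
      have hy1 : (0 : ℝ) < 1 - y := by
        have := hy.2; linarith
      have hid : HasDerivAt (fun w : ℝ => 1 - w) (-1) y := (hasDerivAt_id y).const_sub 1
      have hd1 := hid.rpow_const (p := s) (Or.inl (ne_of_gt hy1))
      have hd2 := hF y hy
      have hmul := hd1.mul hd2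
      have hpow : (1 - y) ^ s = (1 - y) ^ (s - 1) * (1 - y) := by
        have h := Real.rpow_add_one (ne_of_gt hy1) (s - 1)
        rwa [sub_add_cancel] at h
      have hk := hkey y hy
      refine hmul.congr_deriv ?_
      generalize (1 - y) ^ s = P at hpow ⊢
      generalize (1 - y) ^ (s - 1) = Q at hpow ⊢
      generalize (∑' m, g' m y) = T at hk ⊢
      generalize (∑' m, g m y) = U at hk ⊢
      linear_combination Q * hk + T * hpow
    have hIcc : Icc (0 : ℝ) z ⊆ Ioo (-r) r := fun w hw =>
      ⟨by have := hw.1; linarith, lt_of_le_of_lt hw.2 hzr⟩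
    have hcont : ContinuousOn (fun w => (1 - w) ^ s * ∑' m, g m w) (Icc 0 z) := fun w hw =>
      ((hH w (hIcc hw)).continuousAt).continuousWithinAt
    have hconst := constant_of_has_deriv_right_zero hcont
      (fun w hw => (hH w (hIcc (Ico_subset_Icc_self hw))).hasDerivWithinAt) z
      (right_mem_Icc.mpr (le_of_lt h0))
    have hF0 : (∑' m, g m 0) = 1 := by
      rw [tsum_eq_single 0 (by intro m hm; simp [hg, zero_pow hm])]
      simp [hg, pch_zero]
    have h1z : (0 : ℝ) < 1 - z := by linarith
    have hne : (1 - z) ^ s ≠ 0 := (Real.rpow_pos_of_pos h1z s).ne'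
    have hprod : (1 - z) ^ s * (∑' m, g m z) = 1 := by
      rw [hconst]
      simp [hF0, Real.one_rpow]
    have hFz : (∑' m, g m z) = (1 - z) ^ (-s) := by
      rw [Real.rpow_neg (le_of_lt h1z)]
      exact (inv_eq_of_mul_eq_one_right hprod).symm
    have hfin := (hgysum z hzmem).hasSum
    have heq : (∑' m, g m z) = (1 - z) ^ (-s) := hFz
    rw [heq] at hfin
    exact hfin

end EulerHyp

open EulerHyp

/-- Euler transformation: ₂F₁(A,B,C;z) = (1−z)^{C−A−B} ₂F₁(C−A,C−B,C;z) on [0,1). -/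
theorem hyp2F1_euler_transformation (A B C : ℝ) (hCint : ∀ n : ℕ, C ≠ -(n : ℝ)) :
    ∀ z ∈ Set.Ico (0 : ℝ) 1,
      hyp2F1 A B C z = (1 - z) ^ (C - A - B) * hyp2F1 (C - A) (C - B) C z := by
  intro z hz
  obtain ⟨hz0, hz1⟩ := hz
  have hC' : ∀ k : ℕ, C + (k : ℝ) ≠ 0 := by
    intro k h
    exact hCint k (by linarith)
  have hone : ∀ k : ℕ, (1 : ℝ) + (k : ℝ) ≠ 0 := fun k => by positivity
  have habs : |z| < 1 := abs_lt.mpr ⟨by linarith, hz1⟩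
  have hdsum : Summable fun m => ‖hypTermX (A + B - C) 1 1 z m‖ :=
    summable_norm_hypTermX _ 1 1 z hone habs
  have hbsum : Summable fun k => ‖hypTermX (C - A) (C - B) C z k‖ :=
    summable_norm_hypTermX _ _ C z hC' habs
  have hcauchy := tsum_mul_tsum_eq_tsum_sum_antidiagonal_of_summable_norm hdsum hbsum
  have hd : HasSum (fun m => hypTermX (A + B - C) 1 1 z m) ((1 - z) ^ (C - A - B)) := by
    have h := binom_hasSum (A + B - C) hz0 hz1
    rw [show -(A + B - C) = C - A - B by ring] at h
    have heq : (fun m : ℕ => hypTermX (A + B - C) 1 1 z m)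
        = fun m : ℕ => pch (A + B - C) m * z ^ m / m.factorial :=
      funext fun m => hypTermX_one_one _ z m
    rw [heq]
    exact h
  have hterm : ∀ n : ℕ, (∑ p ∈ Finset.HasAntidiagonal.antidiagonal n,
      hypTermX (A + B - C) 1 1 z p.1 * hypTermX (C - A) (C - B) C z p.2)
        = hypTerm A B C z n := by
    intro n
    rw [Finset.Nat.sum_antidiagonal_eq_sum_range_succ_mk, ← Finset.sum_range_reflect]
    simp only [Nat.succ_sub_one]
    have h1 : ∀ j ∈ Finset.range (n + 1),
        hypTermX (A + B - C) 1 1 z (n - j) * hypTermX (C - A) (C - B) C z (n - (n - j))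
          = (bb A B C j * dd A B C (n - j)) * z ^ n := by
      intro j hj
      have hj' : j ≤ n := by simpa [Nat.lt_succ_iff] using Finset.mem_range.mp hj
      obtain ⟨m, rfl⟩ := Nat.exists_eq_add_of_le hj'
      have i1 : j + m - j = m := by omega
      have i2 : j + m - m = j := by omega
      rw [i1, i2, hypTermX_one_one]
      simp only [hypTermX, bb, dd, pow_add]
      ring
    rw [Finset.sum_congr rfl h1, ← Finset.sum_mul, saal hC' n]
    simp only [hypTerm, pch]
    ring
  calc hyp2F1 A B C z = ∑' n : ℕ, hypTerm A B C z n := rfl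
    _ = ∑' n : ℕ, ∑ p ∈ Finset.HasAntidiagonal.antidiagonal n,
          hypTermX (A + B - C) 1 1 z p.1 * hypTermX (C - A) (C - B) C z p.2 :=
        tsum_congr fun n => (hterm n).symm
    _ = (∑' m : ℕ, hypTermX (A + B - C) 1 1 z m)
          * ∑' k : ℕ, hypTermX (C - A) (C - B) C z k := hcauchy.symm
    _ = (1 - z) ^ (C - A - B) * hyp2F1 (C - A) (C - B) C z := by rw [hd.tsum_eq]; rfl
end

section
/- If C > 0 and AB > 0, then the hypergeometric function F(z) = ₂F₁(A,B,C;z) is (strictly) increasing on [0,1). -/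
open Polynomial Set Filter

noncomputable def hypCoef (A B C : ℝ) (n : ℕ) : ℝ :=
  (ascPochhammer ℝ n).eval A * (ascPochhammer ℝ n).eval B /
    (ascPochhammer ℝ n).eval C / n.factorial

lemma pochC_pos {C : ℝ} (hC : 0 < C) (n : ℕ) : 0 < (ascPochhammer ℝ n).eval C :=
  ascPochhammer_pos n C hC

lemma hypCoef_zero (A B C : ℝ) : hypCoef A B C 0 = 1 := by
  simp [hypCoef]

lemma hypCoef_succ (A B C : ℝ) (hC : 0 < C) (n : ℕ) :
    hypCoef A B C (n + 1) = hypCoef A B C n * ((A + n) * (B + n) / ((C + n) * (n + 1))) := by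
  have h1 : (ascPochhammer ℝ n).eval C ≠ 0 := (pochC_pos hC n).ne'
  have h2 : (C : ℝ) + n ≠ 0 := by positivity
  have h3 : ((n.factorial : ℝ)) ≠ 0 := by exact_mod_cast Nat.factorial_ne_zero n
  have h4 : ((n : ℝ) + 1) ≠ 0 := by positivity
  simp only [hypCoef, ascPochhammer_succ_eval, Nat.factorial_succ, Nat.cast_mul,
    Nat.cast_add, Nat.cast_one]
  field_simp

lemma hypCoef_shift (A B C : ℝ) (hC : 0 < C) (n : ℕ) :
    ((n : ℝ) + 1) * hypCoef A B C (n + 1) = (A * B / C) * hypCoef (A+1) (B+1) (C+1) n := by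
  induction n with
  | zero =>
    rw [hypCoef_succ A B C hC 0]
    simp [hypCoef_zero]
  | succ n ih =>
    have hC1 : (0:ℝ) < C + 1 := by linarith
    rw [hypCoef_succ A B C hC (n+1), hypCoef_succ (A+1) (B+1) (C+1) hC1 n]
    have h2 : (C : ℝ) + n ≠ 0 := by positivity
    have h4 : ((n : ℝ) + 1) ≠ 0 := by positivity
    push_cast
    push_cast at ih
    field_simp at ih ⊢
    linear_combination ((A+((n:ℝ)+1))*(B+((n:ℝ)+1))*(C+(n:ℝ)+1)) * ih

lemma tendsto_ratio (A B C : ℝ) (hC : 0 < C) (z : ℝ) :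
    Tendsto (fun n : ℕ => |A + n| / ((n:ℝ) + 1) * (|B + n| / (C + n)) * |z|)
      atTop (nhds |z|) := by
  have t0 : Tendsto (fun n : ℕ => ((n:ℝ) + 1)) atTop atTop :=
    tendsto_atTop_add_const_right _ 1 tendsto_natCast_atTop_atTop
  have t0' : Tendsto (fun n : ℕ => C + (n:ℝ)) atTop atTop :=
    tendsto_atTop_add_const_left _ C tendsto_natCast_atTop_atTop
  have t1 : Tendsto (fun n : ℕ => (A + n) / ((n:ℝ) + 1)) atTop (nhds 1) := by
    have : ∀ n : ℕ, (A + n) / ((n:ℝ) + 1) = 1 + (A - 1) / ((n:ℝ) + 1) := by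
      intro n
      have : ((n:ℝ) + 1) ≠ 0 := by positivity
      field_simp; ring
    simp_rw [this]
    have h := (t0.inv_tendsto_atTop).const_mul (A - 1)
    have := (tendsto_const_nhds (x := (1:ℝ)) (f := (atTop : Filter ℕ))).add h
    simp only [mul_zero, add_zero] at this
    simpa [div_eq_mul_inv] using this
  have t2 : Tendsto (fun n : ℕ => (B + n) / (C + (n:ℝ))) atTop (nhds 1) := by
    have : ∀ᶠ n : ℕ in atTop, (B + n) / (C + (n:ℝ)) = 1 + (B - C) / (C + (n:ℝ)) := by
      filter_upwards [eventually_gt_atTop 0] with n hn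
      have : C + (n:ℝ) ≠ 0 := by positivity
      field_simp; ring
    rw [tendsto_congr' this]
    have h := (t0'.inv_tendsto_atTop).const_mul (B - C)
    have := (tendsto_const_nhds (x := (1:ℝ)) (f := (atTop : Filter ℕ))).add h
    simp only [mul_zero, add_zero] at this
    simpa [div_eq_mul_inv] using this
  have h1 : Tendsto (fun n : ℕ => |A + n| / ((n:ℝ) + 1)) atTop (nhds 1) := by
    have h := t1.abs
    rw [abs_one] at h
    refine h.congr fun n => ?_
    rw [abs_div, abs_of_pos (by positivity : (0:ℝ) < (n:ℝ)+1)]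
  have h2 : Tendsto (fun n : ℕ => |B + n| / (C + (n:ℝ))) atTop (nhds 1) := by
    have h := t2.abs
    rw [abs_one] at h
    refine h.congr fun n => ?_
    rw [abs_div, abs_of_pos (by positivity : (0:ℝ) < C + (n:ℝ))]
  have := (h1.mul h2).mul (tendsto_const_nhds (x := |z|))
  simpa using this

lemma summable_hyp_abs (A B C : ℝ) (hC : 0 < C) {z : ℝ} (hz : |z| < 1) :
    Summable (fun n => |hypCoef A B C n * z ^ n|) := by
  set r : ℝ := (1 + |z|) / 2 with hr
  have hr1 : r < 1 := by rw [hr]; linarith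
  have hzr : |z| < r := by rw [hr]; linarith
  apply summable_of_ratio_norm_eventually_le hr1
  have hev := (tendsto_ratio A B C hC z).eventually_lt_const hzr
  filter_upwards [hev] with n hn
  have key : |hypCoef A B C (n+1) * z ^ (n+1)|
      = (|A + n| / ((n:ℝ) + 1) * (|B + n| / (C + n)) * |z|) * |hypCoef A B C n * z ^ n| := by
    rw [hypCoef_succ A B C hC n]
    rw [pow_succ]
    rw [abs_mul, abs_mul, abs_mul, abs_mul, abs_div,
      abs_mul ((C:ℝ)+n) ((n:ℝ)+1), abs_mul (A+(n:ℝ)) (B+(n:ℝ)),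
      abs_of_pos (by positivity : (0:ℝ) < C + (n:ℝ)),
      abs_of_pos (by positivity : (0:ℝ) < (n:ℝ) + 1)]
    have h2 : (C:ℝ) + n ≠ 0 := by positivity
    have h4 : ((n:ℝ) + 1) ≠ 0 := by positivity
    generalize |A + (n:ℝ)| = x
    generalize |B + (n:ℝ)| = y
    generalize |hypCoef A B C n| = w
    generalize |z ^ n| = p
    field_simp
  rw [Real.norm_eq_abs, Real.norm_eq_abs, abs_abs, abs_abs, key]
  have h0 : (0:ℝ) ≤ |hypCoef A B C n * z ^ n| := abs_nonneg _
  nlinarith [hn, h0]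

lemma hyp2F1_eq (A B C z : ℝ) : hyp2F1 A B C z = ∑' n : ℕ, hypCoef A B C n * z ^ n := by
  unfold hyp2F1 hypTerm hypCoef
  refine tsum_congr fun n => ?_
  ring

lemma summable_hyp (A B C : ℝ) (hC : 0 < C) {z : ℝ} (hz : |z| < 1) :
    Summable (fun n => hypCoef A B C n * z ^ n) := by
  rw [← summable_abs_iff]
  exact summable_hyp_abs A B C hC hz

lemma hyp2F1_zero (A B C : ℝ) : hyp2F1 A B C 0 = 1 := by
  rw [hyp2F1_eq]
  rw [tsum_eq_single 0 (by intro n hn; simp [zero_pow hn])]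
  simp [hypCoef_zero]

lemma hyp2F1_hasDerivAt (A B C : ℝ) (hC : 0 < C) {z : ℝ} (hz : |z| < 1) :
    HasDerivAt (fun t => hyp2F1 A B C t)
      ((A * B / C) * hyp2F1 (A+1) (B+1) (C+1) z) z := by
  have hC1 : (0:ℝ) < C + 1 := by linarith
  set r : ℝ := (1 + |z|) / 2 with hrdef
  have hr0 : 0 < r := by positivity
  have hr1 : r < 1 := by rw [hrdef]; linarith [abs_nonneg z]
  have hzr : |z| < r := by rw [hrdef]; linarith
  have hrr : |r| < 1 := by rwa [abs_of_pos hr0]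
  -- the bounding sequence
  set u : ℕ → ℝ := fun n => ((n:ℝ)) * |hypCoef A B C n| * r ^ (n-1) with hu
  have hu_succ : ∀ n : ℕ, u (n+1) = |A*B/C| * |hypCoef (A+1) (B+1) (C+1) n * r ^ n| := by
    intro n
    have : ((n:ℝ)+1) * hypCoef A B C (n+1) = (A*B/C) * hypCoef (A+1) (B+1) (C+1) n :=
      hypCoef_shift A B C hC n
    have habs := congrArg abs this
    rw [abs_mul, abs_mul, abs_of_pos (by positivity : (0:ℝ) < (n:ℝ)+1)] at habs
    simp only [hu, Nat.add_sub_cancel, abs_mul]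
    push_cast
    rw [habs]
    rw [abs_pow, abs_of_pos hr0]
    ring
  have husum : Summable u := by
    rw [← summable_nat_add_iff 1]
    simp only [hu_succ]
    exact ((summable_hyp_abs (A+1) (B+1) (C+1) hC1 hrr).mul_left _)
  have hderiv : ∀ (n : ℕ) (y : ℝ), y ∈ Set.Ioo (-r) r →
      HasDerivAt (fun t => hypCoef A B C n * t ^ n)
        (hypCoef A B C n * ((n:ℝ) * y ^ (n-1))) y := by
    intro n y _
    exact (hasDerivAt_pow n y).const_mul _
  have hbound : ∀ (n : ℕ) (y : ℝ), y ∈ Set.Ioo (-r) r →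
      ‖hypCoef A B C n * ((n:ℝ) * y ^ (n-1))‖ ≤ u n := by
    intro n y hy
    have hyr : |y| ≤ r := by
      rw [abs_le]; exact ⟨hy.1.le, hy.2.le⟩
    rw [Real.norm_eq_abs, abs_mul, abs_mul]
    rw [hu]
    have : |y ^ (n-1)| ≤ r ^ (n-1) := by
      rw [abs_pow]
      exact pow_le_pow_left₀ (abs_nonneg y) hyr _
    have hn0 : (0:ℝ) ≤ (n:ℝ) := Nat.cast_nonneg n
    calc |hypCoef A B C n| * (|(n:ℝ)| * |y ^ (n-1)|)
        ≤ |hypCoef A B C n| * ((n:ℝ) * r ^ (n-1)) := by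
          rw [abs_of_nonneg hn0]
          exact mul_le_mul_of_nonneg_left (mul_le_mul_of_nonneg_left this hn0) (abs_nonneg _)
      _ = (n:ℝ) * |hypCoef A B C n| * r ^ (n-1) := by ring
  have hz' : z ∈ Set.Ioo (-r) r := by
    constructor <;> [linarith [neg_abs_le z, hzr]; linarith [le_abs_self z, hzr]]
  have key := hasDerivAt_tsum_of_isPreconnected husum isOpen_Ioo
      (convex_Ioo (-r) r).isPreconnected hderiv hbound hz'
      ((summable_hyp A B C hC hz)) hz'
  -- identify function and derivative
  have hfun : (fun t : ℝ => ∑' n : ℕ, hypCoef A B C n * t ^ n) = fun t => hyp2F1 A B C t := by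
    funext t; rw [hyp2F1_eq]
  rw [hfun] at key
  refine key.congr_deriv ?_
  symm
  -- ∑' n, hypCoef n * (n * z^(n-1)) = (A*B/C) * hyp2F1 (A+1) (B+1) (C+1) z
  rw [hyp2F1_eq, ← tsum_mul_left]
  have hsum2 : Summable fun n => (A*B/C) * (hypCoef (A+1) (B+1) (C+1) n * z ^ n) :=
    (summable_hyp (A+1) (B+1) (C+1) hC1 hz).mul_left _
  have hsum1 : Summable fun n => hypCoef A B C n * ((n:ℝ) * z ^ (n-1)) := by
    rw [← summable_nat_add_iff 1]
    refine hsum2.congr fun n => ?_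
    have := hypCoef_shift A B C hC n
    simp only [Nat.add_sub_cancel]
    push_cast
    calc (A*B/C) * (hypCoef (A+1) (B+1) (C+1) n * z ^ n)
        = ((A*B/C) * hypCoef (A+1) (B+1) (C+1) n) * z ^ n := by ring
      _ = (((n:ℝ)+1) * hypCoef A B C (n+1)) * z ^ n := by rw [this]
      _ = hypCoef A B C (n+1) * (((n:ℝ)+1) * z ^ n) := by ring
  rw [Summable.tsum_eq_zero_add hsum1]
  simp only [Nat.cast_zero, zero_mul, mul_zero, zero_add]
  refine tsum_congr fun n => ?_
  have := hypCoef_shift A B C hC n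
  simp only [Nat.add_sub_cancel]
  push_cast
  calc (A*B/C) * (hypCoef (A+1) (B+1) (C+1) n * z ^ n)
      = (((n:ℝ)+1) * hypCoef A B C (n+1)) * z ^ n := by rw [this]; ring
    _ = hypCoef A B C (n+1) * (((n:ℝ)+1) * z ^ n) := by ring

lemma hyp2F1_ode (a b c : ℝ) (hc : 0 < c) {z : ℝ} (hz : |z| < 1) :
    z * (1 - z) * ((a*b/c) * ((a+1)*(b+1)/(c+1)) * hyp2F1 (a+2) (b+2) (c+2) z)
      + (c - (a+b+1)*z) * ((a*b/c) * hyp2F1 (a+1) (b+1) (c+1) z)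
      - a * b * hyp2F1 a b c z = 0 := by
  have hc1 : (0:ℝ) < c + 1 := by linarith
  have hc2 : (0:ℝ) < c + 2 := by linarith
  set v : ℕ → ℝ := hypCoef a b c with hv
  -- termwise shift identities
  have shift1 : ∀ n : ℕ, (a*b/c) * hypCoef (a+1) (b+1) (c+1) n = ((n:ℝ)+1) * v (n+1) :=
    fun n => (hypCoef_shift a b c hc n).symm
  have shift2 : ∀ n : ℕ, (a*b/c) * ((a+1)*(b+1)/(c+1)) * hypCoef (a+2) (b+2) (c+2) n
      = ((n:ℝ)+1) * ((n:ℝ)+2) * v (n+2) := by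
    intro n
    have h1 := hypCoef_shift (a+1) (b+1) (c+1) hc1 n
    have h2 := hypCoef_shift a b c hc (n+1)
    push_cast at h2
    have : (a+1+1) = a+2 := by ring
    rw [this] at h1
    have : (b+1+1) = b+2 := by ring
    rw [this] at h1
    have : (c+1+1) = c+2 := by ring
    rw [this] at h1
    calc (a*b/c) * ((a+1)*(b+1)/(c+1)) * hypCoef (a+2) (b+2) (c+2) n
        = (a*b/c) * (((a+1)*(b+1)/(c+1)) * hypCoef (a+2) (b+2) (c+2) n) := by ring
      _ = (a*b/c) * (((n:ℝ)+1) * hypCoef (a+1) (b+1) (c+1) (n+1)) := by rw [h1]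
      _ = ((n:ℝ)+1) * ((a*b/c) * hypCoef (a+1) (b+1) (c+1) (n+1)) := by ring
      _ = ((n:ℝ)+1) * (((n:ℝ)+1+1) * v (n+1+1)) := by rw [← h2]
      _ = ((n:ℝ)+1) * ((n:ℝ)+2) * v (n+2) := by ring
  -- sequences
  set A0 : ℕ → ℝ := fun n => v n * z ^ n with hA0
  set A1 : ℕ → ℝ := fun n => ((n:ℝ)+1) * v (n+1) * z ^ n with hA1
  set A2 : ℕ → ℝ := fun n => ((n:ℝ)+1) * ((n:ℝ)+2) * v (n+2) * z ^ n with hA2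
  set B1 : ℕ → ℝ := fun n => (n:ℝ) * v n * z ^ n with hB1
  set B2 : ℕ → ℝ := fun n => (n:ℝ) * ((n:ℝ)+1) * v (n+1) * z ^ n with hB2
  set C2 : ℕ → ℝ := fun n => (n:ℝ) * ((n:ℝ)-1) * v n * z ^ n with hC2
  have sA0 : Summable A0 := summable_hyp a b c hc hz
  have sA1 : Summable A1 := by
    refine ((summable_hyp (a+1) (b+1) (c+1) hc1 hz).mul_left (a*b/c)).congr fun n => ?_
    rw [hA1]
    calc (a*b/c) * (hypCoef (a+1) (b+1) (c+1) n * z ^ n)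
        = ((a*b/c) * hypCoef (a+1) (b+1) (c+1) n) * z ^ n := by ring
      _ = ((n:ℝ)+1) * v (n+1) * z ^ n := by rw [shift1]
  have sA2 : Summable A2 := by
    refine ((summable_hyp (a+2) (b+2) (c+2) hc2 hz).mul_left ((a*b/c)*((a+1)*(b+1)/(c+1)))).congr
      fun n => ?_
    rw [hA2]
    calc (a*b/c) * ((a+1)*(b+1)/(c+1)) * (hypCoef (a+2) (b+2) (c+2) n * z ^ n)
        = ((a*b/c) * ((a+1)*(b+1)/(c+1)) * hypCoef (a+2) (b+2) (c+2) n) * z ^ n := by ring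
      _ = ((n:ℝ)+1) * ((n:ℝ)+2) * v (n+2) * z ^ n := by rw [shift2]
  have hB1succ : ∀ n : ℕ, B1 (n+1) = z * A1 n := by
    intro n; rw [hB1, hA1]; push_cast; ring
  have hB2succ : ∀ n : ℕ, B2 (n+1) = z * A2 n := by
    intro n; rw [hB2, hA2]; push_cast; ring
  have hC2succ : ∀ n : ℕ, C2 (n+2) = z^2 * A2 n := by
    intro n; rw [hC2, hA2]; push_cast; ring
  have sB1 : Summable B1 := by
    rw [← summable_nat_add_iff 1]
    simp only [hB1succ]
    exact sA1.mul_left z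
  have sB2 : Summable B2 := by
    rw [← summable_nat_add_iff 1]
    simp only [hB2succ]
    exact sA2.mul_left z
  have sC2 : Summable C2 := by
    rw [← summable_nat_add_iff 2]
    simp only [hC2succ]
    exact sA2.mul_left (z^2)
  -- tsum identities
  have TB1 : ∑' n, B1 n = z * ∑' n, A1 n := by
    rw [Summable.tsum_eq_zero_add sB1]
    simp only [hB1succ]
    rw [tsum_mul_left]
    rw [hB1]; simp
  have TB2 : ∑' n, B2 n = z * ∑' n, A2 n := by
    rw [Summable.tsum_eq_zero_add sB2]
    simp only [hB2succ]
    rw [tsum_mul_left]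
    rw [hB2]; simp
  have TC2 : ∑' n, C2 n = z^2 * ∑' n, A2 n := by
    have s' : Summable fun n => C2 (n+1) := (summable_nat_add_iff 1).mpr sC2
    rw [Summable.tsum_eq_zero_add sC2, Summable.tsum_eq_zero_add s']
    simp only [hC2succ]
    rw [tsum_mul_left]
    rw [hC2]; simp
  -- the termwise recurrence
  have hrec : ∀ n : ℕ, v (n+1) * (((n:ℝ)+1)*(c+n)) = v n * ((a+n)*(b+n)) := by
    intro n
    rw [hv, hypCoef_succ a b c hc n]
    have h2 : (c:ℝ) + n ≠ 0 := by positivity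
    have h4 : ((n:ℝ) + 1) ≠ 0 := by positivity
    have hne : ((c:ℝ)+n) * ((n:ℝ)+1) ≠ 0 := mul_ne_zero h2 h4
    calc hypCoef a b c n * ((a+n)*(b+n)/((c+n)*((n:ℝ)+1))) * (((n:ℝ)+1)*(c+n))
        = hypCoef a b c n * ((a+n)*(b+n)) * (((c+n)*((n:ℝ)+1)) / ((c+n)*((n:ℝ)+1))) := by
          ring
      _ = hypCoef a b c n * ((a+n)*(b+n)) := by rw [div_self hne, mul_one]
  have pointwise : ∀ n : ℕ,
      B2 n - C2 n + c * A1 n - (a+b+1) * B1 n - a*b * A0 n = 0 := by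
    intro n
    rw [hB2, hC2, hA1, hB1, hA0]
    linear_combination z ^ n * hrec n
  have main : ∑' n, (B2 n - C2 n + c * A1 n - (a+b+1) * B1 n - a*b * A0 n) = 0 := by
    rw [tsum_congr pointwise]; exact tsum_zero
  have split : ∑' n, (B2 n - C2 n + c * A1 n - (a+b+1) * B1 n - a*b * A0 n)
      = (∑' n, B2 n) - (∑' n, C2 n) + c * (∑' n, A1 n) - (a+b+1) * (∑' n, B1 n)
        - a*b * (∑' n, A0 n) := by
    rw [Summable.tsum_sub ((((sB2.sub sC2).add (sA1.mul_left c)).sub (sB1.mul_left (a+b+1))))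
        (sA0.mul_left (a*b)),
      Summable.tsum_sub ((sB2.sub sC2).add (sA1.mul_left c)) (sB1.mul_left (a+b+1)),
      Summable.tsum_add (sB2.sub sC2) (sA1.mul_left c),
      Summable.tsum_sub sB2 sC2, tsum_mul_left, tsum_mul_left, tsum_mul_left]
  -- identify hyp2F1 values with the A-sums
  have K0 : hyp2F1 a b c z = ∑' n, A0 n := hyp2F1_eq a b c z
  have K1 : (a*b/c) * hyp2F1 (a+1) (b+1) (c+1) z = ∑' n, A1 n := by
    rw [hyp2F1_eq, ← tsum_mul_left]
    refine tsum_congr fun n => ?_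
    rw [hA1]
    calc (a*b/c) * (hypCoef (a+1) (b+1) (c+1) n * z ^ n)
        = ((a*b/c) * hypCoef (a+1) (b+1) (c+1) n) * z ^ n := by ring
      _ = ((n:ℝ)+1) * v (n+1) * z ^ n := by rw [shift1]
  have K2 : (a*b/c) * ((a+1)*(b+1)/(c+1)) * hyp2F1 (a+2) (b+2) (c+2) z = ∑' n, A2 n := by
    rw [hyp2F1_eq, ← tsum_mul_left]
    refine tsum_congr fun n => ?_
    rw [hA2]
    calc (a*b/c) * ((a+1)*(b+1)/(c+1)) * (hypCoef (a+2) (b+2) (c+2) n * z ^ n)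
        = ((a*b/c) * ((a+1)*(b+1)/(c+1)) * hypCoef (a+2) (b+2) (c+2) n) * z ^ n := by ring
      _ = ((n:ℝ)+1) * ((n:ℝ)+2) * v (n+2) * z ^ n := by rw [shift2]
  rw [K0]
  have goal' : z * (1 - z) * ((a*b/c) * ((a+1)*(b+1)/(c+1)) * hyp2F1 (a+2) (b+2) (c+2) z)
      + (c - (a+b+1)*z) * ((a*b/c) * hyp2F1 (a+1) (b+1) (c+1) z)
      = z * (1-z) * (∑' n, A2 n) + (c - (a+b+1)*z) * (∑' n, A1 n) := by
    rw [K2, K1]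
  rw [show z * (1 - z) * ((a*b/c) * ((a+1)*(b+1)/(c+1)) * hyp2F1 (a+2) (b+2) (c+2) z)
      + (c - (a+b+1)*z) * ((a*b/c) * hyp2F1 (a+1) (b+1) (c+1) z)
      - a * b * ∑' (n : ℕ), A0 n
      = z * (1-z) * (∑' n, A2 n) + (c - (a+b+1)*z) * (∑' n, A1 n)
        - a * b * ∑' (n : ℕ), A0 n from by rw [goal']]
  linear_combination main - split - TB2 + TC2 + (a+b+1) * TB1

/-- Bootstrap positivity lemma for solutions of hypergeometric-type ODEs. -/
lemma ode_pos (γ σ P : ℝ) (hγ : 0 < γ) (hP : 0 < P) (y Dy DDy : ℝ → ℝ)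
    (hy : ∀ z ∈ Set.Ico (0:ℝ) 1, HasDerivAt y (Dy z) z)
    (hDy : ∀ z ∈ Set.Ico (0:ℝ) 1, HasDerivAt Dy (DDy z) z)
    (hode : ∀ z ∈ Set.Ioo (0:ℝ) 1,
      z * (1 - z) * DDy z + (γ - σ * z) * Dy z - P * y z = 0)
    (hy0 : y 0 = 1) :
    ∀ z ∈ Set.Ico (0:ℝ) 1, 0 < y z := by
  intro z0 hz0
  by_contra hcon
  push_neg at hcon
  -- z0 ≠ 0
  have hz0pos : 0 < z0 := by
    rcases lt_or_eq_of_le hz0.1 with h | h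
    · exact h
    · exfalso; rw [← h, hy0] at hcon; linarith
  have hz01 : z0 < 1 := hz0.2
  set Z : Set ℝ := {t | t ∈ Set.Icc 0 z0 ∧ y t ≤ 0} with hZ
  have hsub : Set.Icc (0:ℝ) z0 ⊆ Set.Ico (0:ℝ) 1 := fun t ht => ⟨ht.1, lt_of_le_of_lt ht.2 hz01⟩
  have hycont : ContinuousOn y (Set.Icc 0 z0) := fun t ht =>
    ((hy t (hsub ht)).continuousAt).continuousWithinAt
  have hZclosed : IsClosed Z := by
    have : Z = Set.Icc 0 z0 ∩ y ⁻¹' Set.Iic 0 := rfl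
    rw [this]
    exact ContinuousOn.preimage_isClosed_of_isClosed hycont isClosed_Icc isClosed_Iic
  have hZne : Z.Nonempty := ⟨z0, ⟨⟨hz0pos.le, le_refl _⟩, hcon⟩⟩
  have hZbdd : BddBelow Z := ⟨0, fun t ht => ht.1.1⟩
  set z1 : ℝ := sInf Z with hz1
  have hz1mem : z1 ∈ Z := hZclosed.csInf_mem hZne hZbdd
  have hz1Icc : z1 ∈ Set.Icc (0:ℝ) z0 := hz1mem.1
  have hyz1 : y z1 ≤ 0 := hz1mem.2
  have hz1pos : 0 < z1 := by
    rcases lt_or_eq_of_le hz1Icc.1 with h | h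
    · exact h
    · exfalso; rw [← h, hy0] at hyz1; linarith
  have hz1lt1 : z1 < 1 := lt_of_le_of_lt hz1Icc.2 hz01
  -- positivity before z1
  have hbefore : ∀ t, 0 ≤ t → t < z1 → 0 < y t := by
    intro t ht0 htz1
    by_contra hy'
    push_neg at hy'
    have : t ∈ Z := ⟨⟨ht0, le_trans htz1.le hz1Icc.2⟩, hy'⟩
    exact absurd this (notMem_of_lt_csInf htz1 hZbdd)
  -- the auxiliary function w
  set w : ℝ → ℝ := fun t => t ^ γ * (1 - t) ^ (σ - γ) * Dy t with hw
  have hw0 : w 0 = 0 := by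
    simp [hw, Real.zero_rpow hγ.ne']
  have hIccsub : Set.Icc (0:ℝ) z1 ⊆ Set.Ico (0:ℝ) 1 := fun t ht =>
    ⟨ht.1, lt_of_le_of_lt ht.2 hz1lt1⟩
  have hwcont : ContinuousOn w (Set.Icc 0 z1) := by
    intro t ht
    have h1t : (0:ℝ) < 1 - t := by
      have := lt_of_le_of_lt ht.2 hz1lt1; linarith
    apply ContinuousWithinAt.mul
    apply ContinuousWithinAt.mul
    · exact (Real.continuousAt_rpow_const t γ (Or.inr hγ.le)).continuousWithinAt
    · exact (((Real.continuousAt_rpow_const (1-t) (σ-γ) (Or.inl h1t.ne')).comp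
        (continuous_const.sub continuous_id).continuousAt)).continuousWithinAt
    · exact ((hDy t (hIccsub ht)).continuousAt).continuousWithinAt
  have hwderiv : ∀ t ∈ Set.Ioo (0:ℝ) z1,
      HasDerivAt w (P * t ^ (γ-1) * (1 - t) ^ (σ-γ-1) * y t) t := by
    intro t ht
    have ht0 : 0 < t := ht.1
    have h1t : (0:ℝ) < 1 - t := by
      have := lt_trans ht.2 hz1lt1; linarith
    have d1 : HasDerivAt (fun t : ℝ => t ^ γ) (γ * t ^ (γ-1)) t :=
      Real.hasDerivAt_rpow_const (Or.inl ht0.ne')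
    have d2 : HasDerivAt (fun t : ℝ => (1 - t) ^ (σ - γ)) (-((σ-γ) * (1-t) ^ (σ-γ-1))) t := by
      have base : HasDerivAt (fun u : ℝ => u ^ (σ - γ)) ((σ-γ) * (1-t) ^ (σ-γ-1)) (1-t) :=
        Real.hasDerivAt_rpow_const (Or.inl h1t.ne')
      have lin : HasDerivAt (fun t : ℝ => 1 - t) (-1) t := by
        simpa using (hasDerivAt_id t).const_sub 1
      have := base.comp t lin
      simpa [mul_comm, Function.comp_def] using this
    have d3 : HasDerivAt Dy (DDy t) t := hDy t (hIccsub ⟨ht0.le, ht.2.le⟩)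
    have dprod := (d1.mul d2).mul d3
    -- expression cleanup
    have hode' := hode t ⟨ht0, lt_trans ht.2 hz1lt1⟩
    have e1 : t ^ γ = t ^ (γ-1) * t := by
      rw [← Real.rpow_add_one ht0.ne' (γ-1)]; ring_nf
    have e2 : (1-t) ^ (σ-γ) = (1-t) ^ (σ-γ-1) * (1-t) := by
      rw [← Real.rpow_add_one h1t.ne' (σ-γ-1)]; ring_nf
    refine dprod.congr_deriv ?_
    symm
    simp only [Pi.mul_apply]
    rw [e1, e2]
    linear_combination (-(t ^ (γ-1) * ((1-t) ^ (σ-γ-1)))) * hode'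
  -- w is strictly monotone on [0, z1]
  have hwmono : StrictMonoOn w (Set.Icc 0 z1) := by
    apply strictMonoOn_of_deriv_pos (convex_Icc 0 z1) hwcont
    intro t ht
    rw [interior_Icc] at ht
    rw [(hwderiv t ht).deriv]
    have ht0 : 0 < t := ht.1
    have h1t : (0:ℝ) < 1 - t := by
      have := lt_trans ht.2 hz1lt1; linarith
    have hyt : 0 < y t := hbefore t ht0.le ht.2
    have := Real.rpow_pos_of_pos ht0 (γ-1)
    have := Real.rpow_pos_of_pos h1t (σ-γ-1)
    positivity
  -- hence Dy > 0 on (0, z1)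
  have hDypos : ∀ t ∈ Set.Ioo (0:ℝ) z1, 0 < Dy t := by
    intro t ht
    have h1 : w 0 < w t := hwmono ⟨le_refl 0, hz1pos.le⟩ ⟨ht.1.le, ht.2.le⟩ ht.1
    rw [hw0] at h1
    have ht0 : 0 < t := ht.1
    have h1t : (0:ℝ) < 1 - t := by
      have := lt_trans ht.2 hz1lt1; linarith
    have hp1 : 0 < t ^ γ := Real.rpow_pos_of_pos ht0 γ
    have hp2 : 0 < (1-t) ^ (σ-γ) := Real.rpow_pos_of_pos h1t (σ-γ)
    by_contra hneg
    push_neg at hneg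
    have : w t ≤ 0 := by
      rw [hw]
      have : t ^ γ * (1-t) ^ (σ-γ) * Dy t ≤ 0 :=
        mul_nonpos_of_nonneg_of_nonpos (le_of_lt (mul_pos hp1 hp2)) hneg
      simpa using this
    linarith
  -- y is strictly monotone on [0, z1], contradiction
  have hymono : StrictMonoOn y (Set.Icc 0 z1) := by
    apply strictMonoOn_of_deriv_pos (convex_Icc 0 z1)
      (fun t ht => ((hy t (hIccsub ht)).continuousAt).continuousWithinAt)
    intro t ht
    rw [interior_Icc] at ht
    rw [(hy t (hIccsub ⟨ht.1.le, ht.2.le⟩)).deriv]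
    exact hDypos t ht
  have : y 0 < y z1 := hymono ⟨le_refl 0, hz1pos.le⟩ ⟨hz1pos.le, le_refl _⟩ hz1pos
  rw [hy0] at this
  linarith

lemma abs_lt_one_of_Ico {z : ℝ} (hz : z ∈ Set.Ico (0:ℝ) 1) : |z| < 1 := by
  rw [abs_of_nonneg hz.1]; exact hz.2

/-- positivity of ₂F₁ when c > 0 and ab > 0, via the direct bootstrap. -/
lemma hyp2F1_pos (a b c : ℝ) (hc : 0 < c) (hab : 0 < a * b) :
    ∀ z ∈ Set.Ico (0:ℝ) 1, 0 < hyp2F1 a b c z := by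
  have hc1 : (0:ℝ) < c + 1 := by linarith
  refine ode_pos c (a+b+1) (a*b) hc hab
    (fun z => hyp2F1 a b c z)
    (fun z => (a*b/c) * hyp2F1 (a+1) (b+1) (c+1) z)
    (fun z => (a*b/c) * ((a+1)*(b+1)/(c+1)) * hyp2F1 (a+2) (b+2) (c+2) z)
    ?_ ?_ ?_ ?_
  · intro z hz
    exact hyp2F1_hasDerivAt a b c hc (abs_lt_one_of_Ico hz)
  · intro z hz
    have h := (hyp2F1_hasDerivAt (a+1) (b+1) (c+1) hc1
      (abs_lt_one_of_Ico hz)).const_mul (a*b/c)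
    refine h.congr_deriv ?_
    ring
  · intro z hz
    have hz' : |z| < 1 := by
      rw [abs_of_nonneg hz.1.le]; exact hz.2
    exact hyp2F1_ode a b c hc hz'
  · exact hyp2F1_zero a b c

/-- positivity of the derivative-series hypergeometric in the doubly-negative case,
via the Euler-transformed bootstrap. -/
lemma hyp2F1_shifted_pos_of_neg (A B C : ℝ) (hC : 0 < C) (hA : A < 0) (hB : B < 0) :
    ∀ z ∈ Set.Ico (0:ℝ) 1, 0 < hyp2F1 (A+1) (B+1) (C+1) z := by
  set a : ℝ := A + 1 with ha
  set b : ℝ := B + 1 with hb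
  set c : ℝ := C + 1 with hc
  have hc0 : (0:ℝ) < c := by rw [hc]; linarith
  have hc1 : (0:ℝ) < c + 1 := by linarith
  have hca : 0 < c - a := by rw [hc, ha]; linarith
  have hcb : 0 < c - b := by rw [hc, hb]; linarith
  -- derivative functions of g
  set Dg : ℝ → ℝ := fun z => (a*b/c) * hyp2F1 (a+1) (b+1) (c+1) z with hDg
  set DDg : ℝ → ℝ := fun z => (a*b/c) * ((a+1)*(b+1)/(c+1)) * hyp2F1 (a+2) (b+2) (c+2) z
    with hDDg
  have hgderiv : ∀ z : ℝ, |z| < 1 → HasDerivAt (fun t => hyp2F1 a b c t) (Dg z) z :=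
    fun z hz => hyp2F1_hasDerivAt a b c hc0 hz
  have hDgderiv : ∀ z : ℝ, |z| < 1 → HasDerivAt Dg (DDg z) z := by
    intro z hz
    have h := (hyp2F1_hasDerivAt (a+1) (b+1) (c+1) hc1 hz).const_mul (a*b/c)
    refine h.congr_deriv ?_
    rw [hDDg]; ring
  -- the transformed function y
  set y : ℝ → ℝ := fun z => (1-z) ^ (a+b-c) * hyp2F1 a b c z with hy
  set Dy : ℝ → ℝ := fun z => (1-z) ^ (a+b-c) * Dg z
      - (a+b-c) * (1-z) ^ (a+b-c-1) * hyp2F1 a b c z with hDy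
  set DDy : ℝ → ℝ := fun z => (1-z) ^ (a+b-c) * DDg z
      - 2 * (a+b-c) * (1-z) ^ (a+b-c-1) * Dg z
      + (a+b-c) * (a+b-c-1) * (1-z) ^ (a+b-c-2) * hyp2F1 a b c z with hDDy
  -- derivative of (1-z)^p
  have hrpow : ∀ (p z : ℝ), z < 1 →
      HasDerivAt (fun t : ℝ => (1-t) ^ p) (-(p * (1-z) ^ (p-1))) z := by
    intro p z hz
    have h1z : (0:ℝ) < 1 - z := by linarith
    have base : HasDerivAt (fun u : ℝ => u ^ p) (p * (1-z) ^ (p-1)) (1-z) :=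
      Real.hasDerivAt_rpow_const (Or.inl h1z.ne')
    have lin : HasDerivAt (fun t : ℝ => 1 - t) (-1) z := by
      simpa using (hasDerivAt_id z).const_sub 1
    have := base.comp z lin
    simpa [mul_comm, Function.comp_def] using this
  have hyderiv : ∀ z ∈ Set.Ico (0:ℝ) 1, HasDerivAt y (Dy z) z := by
    intro z hz
    have hz1 : |z| < 1 := abs_lt_one_of_Ico hz
    have := (hrpow (a+b-c) z hz.2).mul (hgderiv z hz1)
    refine this.congr_deriv ?_
    rw [hDy]; ring
  have hDyderiv : ∀ z ∈ Set.Ico (0:ℝ) 1, HasDerivAt Dy (DDy z) z := by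
    intro z hz
    have hz1 : |z| < 1 := abs_lt_one_of_Ico hz
    have d1 := (hrpow (a+b-c) z hz.2).mul (hDgderiv z hz1)
    have d2a : HasDerivAt (fun t : ℝ => (a+b-c) * (1-t) ^ (a+b-c-1))
        ((a+b-c) * -((a+b-c-1) * (1-z) ^ (a+b-c-1-1))) z :=
      (hrpow (a+b-c-1) z hz.2).const_mul (a+b-c)
    have d2 := d2a.mul (hgderiv z hz1)
    have hsum := d1.sub d2
    refine hsum.congr_deriv ?_
    rw [hDDy, show a+b-c-1-1 = a+b-c-2 from by ring]
    ring
  -- transformed ODE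
  have hode : ∀ z ∈ Set.Ioo (0:ℝ) 1,
      z * (1-z) * DDy z + (c - (2*c-a-b+1) * z) * Dy z - ((c-a)*(c-b)) * y z = 0 := by
    intro z hz
    have hz1 : |z| < 1 := by rw [abs_of_nonneg hz.1.le]; exact hz.2
    have base := hyp2F1_ode a b c hc0 hz1
    have h1z : (0:ℝ) < 1 - z := by linarith [hz.2]
    have E2 : (1-z) ^ (a+b-c-1) = (1-z) ^ (a+b-c-2) * (1-z) := by
      rw [← Real.rpow_add_one h1z.ne' (a+b-c-2)]; ring_nf
    have E1 : (1-z) ^ (a+b-c) = (1-z) ^ (a+b-c-2) * (1-z) * (1-z) := by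
      rw [← Real.rpow_add_one h1z.ne' (a+b-c-2), ← Real.rpow_add_one h1z.ne' (a+b-c-2+1)]
      ring_nf
    simp only [hDDy, hDy, hy]
    rw [E1, E2]
    linear_combination ((1-z) ^ (a+b-c-2) * (1-z) * (1-z)) * base
  have hy0 : y 0 = 1 := by
    rw [hy]
    simp [Real.one_rpow, hyp2F1_zero]
  have hP : 0 < (c-a)*(c-b) := mul_pos hca hcb
  have hpos := ode_pos c (2*c-a-b+1) ((c-a)*(c-b)) hc0 hP y Dy DDy hyderiv hDyderiv hode hy0
  -- conclude positivity of g from positivity of y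
  intro z hz
  have hyz := hpos z hz
  have h1z : (0:ℝ) < 1 - z := by linarith [hz.2]
  have hzp : 0 < (1-z) ^ (a+b-c) := Real.rpow_pos_of_pos h1z _
  rw [hy] at hyz
  have hyz' : 0 < (1-z) ^ (a+b-c) * hyp2F1 a b c z := hyz
  by_contra hg
  push_neg at hg
  nlinarith [mul_nonpos_of_nonneg_of_nonpos hzp.le hg]

/-- If C > 0 and AB > 0, then ₂F₁(A,B,C;·) is strictly increasing on [0,1). -/
theorem hyp2F1_strictMonoOn (A B C : ℝ) (hC : 0 < C) (hAB : 0 < A * B) :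
    StrictMonoOn (hyp2F1 A B C) (Set.Ico (0 : ℝ) 1) := by
  have hC1 : (0:ℝ) < C + 1 := by linarith
  apply strictMonoOn_of_deriv_pos (convex_Ico 0 1)
  · intro z hz
    exact (hyp2F1_hasDerivAt A B C hC (abs_lt_one_of_Ico hz)).continuousAt.continuousWithinAt
  · intro z hz
    rw [interior_Ico] at hz
    have hz' : |z| < 1 := by rw [abs_of_nonneg hz.1.le]; exact hz.2
    have hd := hyp2F1_hasDerivAt A B C hC hz'
    rw [hd.deriv]
    have hg : 0 < hyp2F1 (A+1) (B+1) (C+1) z := by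
      rcases pos_and_pos_or_neg_and_neg_of_mul_pos hAB with ⟨hA, hB⟩ | ⟨hA, hB⟩
      · exact hyp2F1_pos (A+1) (B+1) (C+1) hC1
          (by nlinarith) z ⟨hz.1.le, hz.2⟩
      · exact hyp2F1_shifted_pos_of_neg A B C hC hA hB z ⟨hz.1.le, hz.2⟩
    exact mul_pos (div_pos hAB hC) hg
end

section
/- For real parameters A, B, C with C − A − B not an integer, the function F(z) = (1−z)^{C−A−B} ₂F₁(C−A, C−B, 1+C−A−B; 1−z) satisfies Euler's hypergeometric differential equation z(1−z)F''(z) + (C − (A+B+1)z)F'(z) − AB·F(z) = 0 on (0,1). -/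
open Polynomial Set Filter

noncomputable def hypCoeff (a b c : ℝ) (n : ℕ) : ℝ :=
  (ascPochhammer ℝ n).eval a * (ascPochhammer ℝ n).eval b /
    (ascPochhammer ℝ n).eval c / n.factorial

lemma asc_ne_zero {c : ℝ} (hc : ∀ k : ℕ, c + k ≠ 0) (n : ℕ) :
    (ascPochhammer ℝ n).eval c ≠ 0 := by
  induction n with
  | zero => simp
  | succ n ih =>
    rw [ascPochhammer_succ_eval]
    exact mul_ne_zero ih (hc n)

lemma hypCoeff_rec {a b c : ℝ} (hc : ∀ k : ℕ, c + k ≠ 0) (n : ℕ) :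
    hypCoeff a b c (n + 1) * ((n + 1) * (c + n)) = hypCoeff a b c n * ((n + a) * (n + b)) := by
  unfold hypCoeff
  rw [ascPochhammer_succ_eval, ascPochhammer_succ_eval, ascPochhammer_succ_eval,
    Nat.factorial_succ]
  have h1 := asc_ne_zero hc n
  have h2 := hc n
  have h3 : ((n + 1 : ℕ).factorial : ℝ) ≠ 0 := by positivity
  have h4 : ((n).factorial : ℝ) ≠ 0 := by positivity
  push_cast [Nat.factorial_succ]
  field_simp
  ring

lemma geom_bound {f : ℕ → ℝ} {ρ : ℝ} (hρ : 0 < ρ) {N : ℕ}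
    (h : ∀ n, N ≤ n → f (n + 1) ≤ ρ * f n) :
    ∀ n, N ≤ n → f n ≤ f N / ρ ^ N * ρ ^ n := by
  intro n hn
  induction n, hn using Nat.le_induction with
  | base =>
    have : (ρ : ℝ) ^ N ≠ 0 := by positivity
    field_simp
    exact le_rfl
  | succ n hn ih =>
    calc f (n + 1) ≤ ρ * f n := h n hn
    _ ≤ ρ * (f N / ρ ^ N * ρ ^ n) := by
        have := ih
        nlinarith [pow_pos hρ n]
    _ = f N / ρ ^ N * ρ ^ (n + 1) := by ring

lemma ratio_eventually {a b c : ℝ} (hc : ∀ k : ℕ, c + k ≠ 0) {ρ : ℝ} (hρ : 1 < ρ) :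
    ∀ᶠ n in atTop, |hypCoeff a b c (n + 1)| ≤ ρ * |hypCoeff a b c n| := by
  have hε0 : 0 < ρ - 1 := by linarith
  have e1 : ∀ᶠ n : ℕ in atTop, (|a| + |b| + |c| + 1 : ℝ) ≤ n :=
    tendsto_natCast_atTop_atTop.eventually_ge_atTop _
  have e2 : ∀ᶠ n : ℕ in atTop,
      (|ρ * (1 + c) - a - b| + |ρ * c - a * b| + 1 : ℝ) ≤ (ρ - 1) * n := by
    have : Tendsto (fun n : ℕ => (ρ - 1) * (n : ℝ)) atTop atTop :=
      (tendsto_natCast_atTop_atTop (R := ℝ)).const_mul_atTop hε0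
    exact this.eventually_ge_atTop _
  filter_upwards [e1, e2, eventually_ge_atTop 1] with n hn1 hn2 hn3
  have hna : 0 < (n : ℝ) + a := by
    have := neg_le_abs a
    nlinarith [abs_nonneg b, abs_nonneg c]
  have hnb : 0 < (n : ℝ) + b := by
    have := neg_le_abs b
    nlinarith [abs_nonneg a, abs_nonneg c]
  have hnc : 0 < c + (n : ℝ) := by
    have := neg_le_abs c
    nlinarith [abs_nonneg a, abs_nonneg b]
  have hn0 : (1 : ℝ) ≤ n := by exact_mod_cast hn3
  have key : ((n : ℝ) + a) * (n + b) ≤ ρ * (((n : ℝ) + 1) * (c + n)) := by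
    nlinarith [mul_le_mul_of_nonneg_right hn2 (by positivity : (0:ℝ) ≤ (n:ℝ)),
      mul_le_mul_of_nonneg_right (neg_le_abs (ρ * (1 + c) - a - b))
        (by positivity : (0:ℝ) ≤ (n:ℝ)),
      neg_le_abs (ρ * c - a * b), abs_nonneg (ρ * c - a * b)]
  have hrec := hypCoeff_rec (a := a) (b := b) hc n
  have hpos1 : (0 : ℝ) < ((n : ℝ) + 1) * (c + n) := by positivity
  have hpos2 : (0 : ℝ) < ((n : ℝ) + a) * ((n : ℝ) + b) := by positivity
  have habs : |hypCoeff a b c (n + 1)| * (((n : ℝ) + 1) * (c + n)) =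
      |hypCoeff a b c n| * (((n : ℝ) + a) * ((n : ℝ) + b)) := by
    rw [← abs_of_pos hpos1, ← abs_mul, hrec, abs_mul, abs_of_pos hpos2]
  rw [← mul_le_mul_iff_of_pos_right hpos1, habs]
  nlinarith [mul_le_mul_of_nonneg_left key (abs_nonneg (hypCoeff a b c n))]

lemma summable_master {a b c : ℝ} (hc : ∀ k : ℕ, c + k ≠ 0) {r : ℝ}
    (hr0 : 0 < r) (hr1 : r < 1) :
    Summable (fun n => |hypCoeff a b c n| * (n + 1) ^ 2 * r ^ n) := by
  set ρ := (1 + r) / (2 * r) with hρdef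
  have hρ1 : 1 < ρ := by rw [hρdef, lt_div_iff₀ (by positivity)]; linarith
  have hρ0 : 0 < ρ := by linarith
  have hρr : ρ * r = (1 + r) / 2 := by rw [hρdef]; field_simp
  have hρr1 : ρ * r < 1 := by rw [hρr]; linarith
  have hρr0 : 0 ≤ ρ * r := by positivity
  obtain ⟨N, hN⟩ := eventually_atTop.mp (ratio_eventually (a := a) (b := b) hc hρ1)
  have hbound := geom_bound hρ0 (f := fun n => |hypCoeff a b c n|) (N := N)
    (fun n hn => hN n hn)
  set M := |hypCoeff a b c N| / ρ ^ N with hM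
  have hgeom : Summable (fun n : ℕ => M * (((n : ℝ) ^ 2 + 2 * n + 1) * (ρ * r) ^ n)) := by
    apply Summable.mul_left
    have h2 := summable_pow_mul_geometric_of_norm_lt_one (R := ℝ) 2 (r := ρ * r)
      (by rwa [Real.norm_eq_abs, abs_of_nonneg hρr0])
    have h1 := summable_pow_mul_geometric_of_norm_lt_one (R := ℝ) 1 (r := ρ * r)
      (by rwa [Real.norm_eq_abs, abs_of_nonneg hρr0])
    have h0 := summable_geometric_of_lt_one hρr0 hρr1
    have := (h2.add ((h1.mul_left 2).add h0))
    refine this.congr fun n => ?_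
    push_cast
    ring
  apply Summable.of_norm_bounded_eventually_nat hgeom
  filter_upwards [eventually_ge_atTop N] with n hn
  have h1 : |hypCoeff a b c n| ≤ M * ρ ^ n := hbound n hn
  have h2 : (0:ℝ) ≤ M := by positivity
  rw [Real.norm_eq_abs, abs_of_nonneg (by positivity)]
  calc |hypCoeff a b c n| * ((n : ℝ) + 1) ^ 2 * r ^ n
      ≤ (M * ρ ^ n) * ((n : ℝ) + 1) ^ 2 * r ^ n := by
        apply mul_le_mul_of_nonneg_right (mul_le_mul_of_nonneg_right h1 (by positivity))
          (by positivity)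
    _ = M * (((n : ℝ) ^ 2 + 2 * n + 1) * (ρ * r) ^ n) := by
        rw [mul_pow]; ring

noncomputable def hS0 (a b c w : ℝ) : ℝ := ∑' n : ℕ, hypCoeff a b c n * w ^ n
noncomputable def hS1 (a b c w : ℝ) : ℝ :=
  ∑' n : ℕ, hypCoeff a b c n * (n * w ^ (n - 1))
noncomputable def hS2 (a b c w : ℝ) : ℝ :=
  ∑' n : ℕ, hypCoeff a b c n * (n * ((n - 1 : ℕ) * w ^ (n - 1 - 1)))

lemma bound1 {a b c r : ℝ} (hr0 : 0 < r) (n : ℕ) {y : ℝ} (hy : |y| ≤ r) :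
    ‖hypCoeff a b c n * (n * y ^ (n - 1))‖ ≤
      |hypCoeff a b c n| * (n + 1) ^ 2 * r ^ n * r⁻¹ := by
  rw [Real.norm_eq_abs, abs_mul, abs_mul, abs_pow, Nat.abs_cast]
  rw [mul_assoc, mul_assoc]
  apply mul_le_mul_of_nonneg_left _ (abs_nonneg _)
  match n with
  | 0 => simp; positivity
  | (m + 1) =>
    have h1 : |y| ^ m ≤ r ^ m := pow_le_pow_left₀ (abs_nonneg y) hy m
    have hm : (0:ℝ) ≤ m := by positivity
    simp only [Nat.add_sub_cancel]
    push_cast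
    have hrr : r ^ (m + 1) * r⁻¹ = r ^ m := by rw [pow_succ]; field_simp
    rw [hrr]
    exact mul_le_mul (by nlinarith) h1 (by positivity) (by positivity)

lemma bound2 {a b c r : ℝ} (hr0 : 0 < r) (n : ℕ) {y : ℝ} (hy : |y| ≤ r) :
    ‖hypCoeff a b c n * (n * ((n - 1 : ℕ) * y ^ (n - 1 - 1)))‖ ≤
      |hypCoeff a b c n| * (n + 1) ^ 2 * r ^ n * r⁻¹ * r⁻¹ := by
  rw [Real.norm_eq_abs, abs_mul, abs_mul, abs_mul, abs_pow, Nat.abs_cast, Nat.abs_cast]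
  rw [mul_assoc, mul_assoc, mul_assoc]
  apply mul_le_mul_of_nonneg_left _ (abs_nonneg _)
  match n with
  | 0 => norm_num; positivity
  | 1 => norm_num; positivity
  | (m + 2) =>
    have h1 : |y| ^ m ≤ r ^ m := pow_le_pow_left₀ (abs_nonneg y) hy m
    have hm : (0:ℝ) ≤ m := by positivity
    have e1 : m + 2 - 1 = m + 1 := by omega
    have e2 : m + 1 - 1 = m := by omega
    rw [e1, e2]
    push_cast
    have hrr : r ^ (m + 2) * (r⁻¹ * r⁻¹) = r ^ m := by
      rw [pow_succ, pow_succ]; field_simp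
    rw [hrr,
      show ((m:ℝ)+2) * (((m:ℝ)+1) * |y|^m) = (((m:ℝ)+2) * ((m:ℝ)+1)) * |y|^m by ring]
    exact mul_le_mul (by nlinarith) h1 (by positivity) (by positivity)

lemma hasDerivAt_hS0 {a b c w : ℝ} (hc : ∀ k : ℕ, c + k ≠ 0) (hw : w ∈ Ioo (0:ℝ) 1) :
    HasDerivAt (hS0 a b c) (hS1 a b c w) w := by
  obtain ⟨hw0, hw1⟩ := hw
  set r := (1 + w) / 2 with hrdef
  have hr0 : 0 < r := by rw [hrdef]; linarith
  have hr1 : r < 1 := by rw [hrdef]; linarith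
  have hsub : ∀ y : ℝ, y ∈ Ioo (-r) r → |y| ≤ r := fun y hy => (abs_lt.mpr ⟨hy.1, hy.2⟩).le
  have hu : Summable (fun n : ℕ => |hypCoeff a b c n| * (n + 1) ^ 2 * r ^ n * r⁻¹) :=
    (summable_master hc hr0 hr1).mul_right r⁻¹
  have hmem : w ∈ Ioo (-r) r := ⟨by linarith, by rw [hrdef]; linarith⟩
  have hsum0 : Summable (fun n : ℕ => hypCoeff a b c n * w ^ n) := by
    apply Summable.of_norm_bounded (summable_master hc hr0 hr1)
    intro n
    have hwr : |w| ^ n ≤ r ^ n := pow_le_pow_left₀ (abs_nonneg w) (hsub w hmem) n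
    have h2 : (1:ℝ) ≤ ((n:ℝ) + 1) ^ 2 := by nlinarith [Nat.cast_nonneg (α := ℝ) n]
    rw [Real.norm_eq_abs, abs_mul, abs_pow]
    calc |hypCoeff a b c n| * |w| ^ n ≤ |hypCoeff a b c n| * r ^ n :=
          mul_le_mul_of_nonneg_left hwr (abs_nonneg _)
      _ = |hypCoeff a b c n| * 1 * r ^ n := by ring
      _ ≤ |hypCoeff a b c n| * ((n:ℝ) + 1) ^ 2 * r ^ n :=
          mul_le_mul_of_nonneg_right
            (mul_le_mul_of_nonneg_left h2 (abs_nonneg _)) (pow_nonneg hr0.le n)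
  exact hasDerivAt_tsum_of_isPreconnected hu isOpen_Ioo isPreconnected_Ioo
    (fun n y _ => (hasDerivAt_pow n y).const_mul (hypCoeff a b c n))
    (fun n y hy => bound1 hr0 n (hsub y hy)) hmem hsum0 hmem

lemma hasDerivAt_hS1 {a b c w : ℝ} (hc : ∀ k : ℕ, c + k ≠ 0) (hw : w ∈ Ioo (0:ℝ) 1) :
    HasDerivAt (hS1 a b c) (hS2 a b c w) w := by
  obtain ⟨hw0, hw1⟩ := hw
  set r := (1 + w) / 2 with hrdef
  have hr0 : 0 < r := by rw [hrdef]; linarith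
  have hr1 : r < 1 := by rw [hrdef]; linarith
  have hsub : ∀ y : ℝ, y ∈ Ioo (-r) r → |y| ≤ r := fun y hy => (abs_lt.mpr ⟨hy.1, hy.2⟩).le
  have hu : Summable (fun n : ℕ => |hypCoeff a b c n| * (n + 1) ^ 2 * r ^ n * r⁻¹ * r⁻¹) :=
    ((summable_master hc hr0 hr1).mul_right r⁻¹).mul_right r⁻¹
  have hmem : w ∈ Ioo (-r) r := ⟨by linarith, by rw [hrdef]; linarith⟩
  have hsum1 : Summable (fun n : ℕ => hypCoeff a b c n * (n * w ^ (n - 1))) :=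
    Summable.of_norm_bounded ((summable_master hc hr0 hr1).mul_right r⁻¹)
      (fun n => bound1 hr0 n (hsub w hmem))
  exact hasDerivAt_tsum_of_isPreconnected hu isOpen_Ioo isPreconnected_Ioo
    (fun n y _ => ((hasDerivAt_pow (n - 1) y).const_mul (n : ℝ)).const_mul (hypCoeff a b c n))
    (fun n y hy => bound2 hr0 n (hsub y hy)) hmem hsum1 hmem

lemma hyp_ode {a b c w : ℝ} (hc : ∀ k : ℕ, c + k ≠ 0) (hw : w ∈ Ioo (0:ℝ) 1) :
    w * (1 - w) * hS2 a b c w + (c - (a + b + 1) * w) * hS1 a b c w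
      - a * b * hS0 a b c w = 0 := by
  obtain ⟨hw0, hw1⟩ := hw
  have hwabs : |w| ≤ w := (abs_of_pos hw0).le
  have hM := summable_master (a := a) (b := b) hc hw0 hw1
  have h0 : Summable (fun n : ℕ => hypCoeff a b c n * w ^ n) := by
    apply Summable.of_norm_bounded hM
    intro n
    have hwr : |w| ^ n ≤ w ^ n := pow_le_pow_left₀ (abs_nonneg w) hwabs n
    have h2 : (1:ℝ) ≤ ((n:ℝ) + 1) ^ 2 := by nlinarith [Nat.cast_nonneg (α := ℝ) n]
    rw [Real.norm_eq_abs, abs_mul, abs_pow]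
    calc |hypCoeff a b c n| * |w| ^ n ≤ |hypCoeff a b c n| * w ^ n :=
          mul_le_mul_of_nonneg_left hwr (abs_nonneg _)
      _ = |hypCoeff a b c n| * 1 * w ^ n := by ring
      _ ≤ |hypCoeff a b c n| * ((n:ℝ) + 1) ^ 2 * w ^ n :=
          mul_le_mul_of_nonneg_right
            (mul_le_mul_of_nonneg_left h2 (abs_nonneg _)) (pow_nonneg hw0.le n)
  have h1 : Summable (fun n : ℕ => hypCoeff a b c n * (n * w ^ (n - 1))) :=
    Summable.of_norm_bounded (hM.mul_right w⁻¹) (fun n => bound1 hw0 n hwabs)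
  have h2 : Summable (fun n : ℕ => hypCoeff a b c n * (n * ((n - 1 : ℕ) * w ^ (n - 1 - 1)))) :=
    Summable.of_norm_bounded ((hM.mul_right w⁻¹).mul_right w⁻¹)
      (fun n => bound2 hw0 n hwabs)
  set ψ : ℕ → ℝ := fun n => hypCoeff a b c n * (((n:ℝ) + a) * ((n:ℝ) + b)) * w ^ n with hψdef
  set φ : ℕ → ℝ := fun n =>
    hypCoeff a b c n * ((n:ℝ) * (((n:ℝ) - 1 + c) * w ^ (n - 1))) with hφdef
  set q : ℕ → ℝ := fun n =>
    w * (1 - w) * (hypCoeff a b c n * (n * ((n - 1 : ℕ) * w ^ (n - 1 - 1))))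
    + (c - (a + b + 1) * w) * (hypCoeff a b c n * (n * w ^ (n - 1)))
    - a * b * (hypCoeff a b c n * w ^ n) with hqdef
  have hq : Summable q := ((h2.mul_left _).add (h1.mul_left _)).sub (h0.mul_left _)
  have hψ : Summable ψ := by
    apply Summable.of_norm_bounded (hM.mul_left ((1 + |a|) * (1 + |b|)))
    intro n
    have hn0 : (0:ℝ) ≤ n := Nat.cast_nonneg n
    have ha' : |(n:ℝ) + a| ≤ (1 + |a|) * ((n:ℝ) + 1) := by
      calc |(n:ℝ) + a| ≤ |(n:ℝ)| + |a| := abs_add_le _ _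
        _ = (n:ℝ) + |a| := by rw [abs_of_nonneg hn0]
        _ ≤ (1 + |a|) * ((n:ℝ) + 1) := by nlinarith [abs_nonneg a]
    have hb' : |(n:ℝ) + b| ≤ (1 + |b|) * ((n:ℝ) + 1) := by
      calc |(n:ℝ) + b| ≤ |(n:ℝ)| + |b| := abs_add_le _ _
        _ = (n:ℝ) + |b| := by rw [abs_of_nonneg hn0]
        _ ≤ (1 + |b|) * ((n:ℝ) + 1) := by nlinarith [abs_nonneg b]
    have hab : |((n:ℝ) + a) * ((n:ℝ) + b)| ≤ ((1 + |a|) * (1 + |b|)) * ((n:ℝ) + 1) ^ 2 := by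
      rw [abs_mul]
      calc |(n:ℝ) + a| * |(n:ℝ) + b| ≤ ((1 + |a|) * ((n:ℝ) + 1)) * ((1 + |b|) * ((n:ℝ) + 1)) :=
            mul_le_mul ha' hb' (abs_nonneg _) (by positivity)
        _ = ((1 + |a|) * (1 + |b|)) * ((n:ℝ) + 1) ^ 2 := by ring
    rw [Real.norm_eq_abs, hψdef]
    simp only
    rw [abs_mul, abs_mul, abs_pow, abs_of_pos hw0]
    calc |hypCoeff a b c n| * |((n:ℝ) + a) * ((n:ℝ) + b)| * w ^ n
        ≤ |hypCoeff a b c n| * (((1 + |a|) * (1 + |b|)) * ((n:ℝ) + 1) ^ 2) * w ^ n := by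
          apply mul_le_mul_of_nonneg_right
            (mul_le_mul_of_nonneg_left hab (abs_nonneg _)) (pow_nonneg hw0.le n)
      _ = (1 + |a|) * (1 + |b|) * (|hypCoeff a b c n| * ((n:ℝ) + 1) ^ 2 * w ^ n) := by ring
  have hqφψ : ∀ n, q n = φ n - ψ n := by
    intro n
    rw [hqdef, hφdef, hψdef]
    simp only
    match n with
    | 0 => norm_num; ring
    | 1 => norm_num; ring
    | (m + 2) =>
      have e1 : m + 2 - 1 = m + 1 := by omega
      have e2 : m + 1 - 1 = m := by omega
      rw [e1, e2]
      push_cast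
      rw [show w ^ (m + 2) = w ^ m * w * w by ring, show w ^ (m + 1) = w ^ m * w by ring]
      ring
  have hφ : Summable φ := by
    apply (hq.add hψ).congr
    intro n
    rw [hqφψ n]; ring
  have hshift : ∑' n, φ n = ∑' n, ψ n := by
    rw [Summable.tsum_eq_zero_add hφ]
    have hφ0 : φ 0 = 0 := by rw [hφdef]; norm_num
    rw [hφ0, zero_add]
    apply tsum_congr
    intro n
    have e1 : n + 1 - 1 = n := by omega
    rw [hφdef, hψdef]
    simp only
    rw [e1]
    have : hypCoeff a b c (n + 1) * (((n:ℝ) + 1) * (((n:ℝ) + 1 - 1 + c) * w ^ n))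
        = hypCoeff a b c (n + 1) * (((n:ℝ) + 1) * (c + (n:ℝ))) * w ^ n := by ring
    push_cast
    rw [this, hypCoeff_rec hc n]
  have main : w * (1 - w) * hS2 a b c w + (c - (a + b + 1) * w) * hS1 a b c w
      - a * b * hS0 a b c w = ∑' n, q n := by
    rw [hS0, hS1, hS2, ← tsum_mul_left, ← tsum_mul_left, ← tsum_mul_left,
      ← Summable.tsum_add (h2.mul_left _) (h1.mul_left _),
      ← Summable.tsum_sub ((h2.mul_left _).add (h1.mul_left _)) (h0.mul_left _)]
  rw [main, tsum_congr hqφψ, Summable.tsum_sub hφ hψ, hshift, sub_self]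

lemma aux_deriv_inner {a b c : ℝ} (hc : ∀ k : ℕ, c + k ≠ 0) {x : ℝ} (hx : x ∈ Ioo (0:ℝ) 1) :
    HasDerivAt (fun x : ℝ => hS0 a b c (1 - x)) (hS1 a b c (1 - x) * (-1)) x := by
  have hlin : HasDerivAt (fun x : ℝ => 1 - x) (-1) x := (hasDerivAt_id x).const_sub 1
  have hmem : (1 - x) ∈ Ioo (0:ℝ) 1 := ⟨by linarith [hx.2], by linarith [hx.1]⟩
  simpa [Function.comp_def] using (hasDerivAt_hS0 hc hmem).comp x hlin

lemma aux_deriv_inner1 {a b c : ℝ} (hc : ∀ k : ℕ, c + k ≠ 0) {x : ℝ} (hx : x ∈ Ioo (0:ℝ) 1) :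
    HasDerivAt (fun x : ℝ => hS1 a b c (1 - x)) (hS2 a b c (1 - x) * (-1)) x := by
  have hlin : HasDerivAt (fun x : ℝ => 1 - x) (-1) x := (hasDerivAt_id x).const_sub 1
  have hmem : (1 - x) ∈ Ioo (0:ℝ) 1 := ⟨by linarith [hx.2], by linarith [hx.1]⟩
  simpa [Function.comp_def] using (hasDerivAt_hS1 hc hmem).comp x hlin

lemma aux_deriv_rpow (p : ℝ) {x : ℝ} (hx : x ∈ Ioo (0:ℝ) 1) :
    HasDerivAt (fun x : ℝ => (1 - x) ^ p) (p * (1 - x) ^ (p - 1) * (-1)) x := by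
  have hlin : HasDerivAt (fun x : ℝ => 1 - x) (-1) x := (hasDerivAt_id x).const_sub 1
  have h1x : (0:ℝ) < 1 - x := by linarith [hx.2]
  simpa [Function.comp_def] using
    (Real.hasDerivAt_rpow_const (x := 1 - x) (p := p) (Or.inl h1x.ne')).comp x hlin

lemma hasDerivAt_outer {a b c : ℝ} (s : ℝ) (hc : ∀ k : ℕ, c + k ≠ 0) {x : ℝ}
    (hx : x ∈ Ioo (0:ℝ) 1) :
    HasDerivAt (fun x : ℝ => (1 - x) ^ s * hS0 a b c (1 - x))
      (-(s * ((1 - x) ^ (s - 1) * hS0 a b c (1 - x)))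
        - (1 - x) ^ s * hS1 a b c (1 - x)) x := by
  have := (aux_deriv_rpow s hx).mul (aux_deriv_inner (a := a) (b := b) hc hx)
  refine this.congr_deriv ?_
  ring

lemma hasDerivAt_outer' {a b c : ℝ} (s : ℝ) (hc : ∀ k : ℕ, c + k ≠ 0) {x : ℝ}
    (hx : x ∈ Ioo (0:ℝ) 1) :
    HasDerivAt (fun x : ℝ =>
        -(s * ((1 - x) ^ (s - 1) * hS0 a b c (1 - x))) - (1 - x) ^ s * hS1 a b c (1 - x))
      (s * (s - 1) * ((1 - x) ^ (s - 1 - 1) * hS0 a b c (1 - x))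
        + 2 * s * ((1 - x) ^ (s - 1) * hS1 a b c (1 - x))
        + (1 - x) ^ s * hS2 a b c (1 - x)) x := by
  have h1 := ((aux_deriv_rpow (s - 1) hx).mul (aux_deriv_inner (a := a) (b := b) hc hx)).const_mul s
  have h2 := (aux_deriv_rpow s hx).mul (aux_deriv_inner1 (a := a) (b := b) hc hx)
  have := h1.neg.sub h2
  refine this.congr_deriv ?_
  ring


lemma hyp2F1_eq_hS0 (a b c z : ℝ) : hyp2F1 a b c z = hS0 a b c z := by
  apply tsum_congr
  intro n
  unfold hypTerm hypCoeff
  ring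

/-- If C−A−B is not an integer, then
z ↦ (1−z)^{C−A−B} ₂F₁(C−A, C−B, 1+C−A−B; 1−z) satisfies Euler's hypergeometric
differential equation on (0,1). -/
theorem second_solution_at_one (A B C : ℝ) (h : ∀ n : ℤ, C - A - B ≠ (n : ℝ)) :
    ∀ z ∈ Set.Ioo (0 : ℝ) 1,
      z * (1 - z) *
          deriv (deriv (fun x : ℝ =>
            (1 - x) ^ (C - A - B) * hyp2F1 (C - A) (C - B) (1 + C - A - B) (1 - x))) z
        + (C - (A + B + 1) * z) *
          deriv (fun x : ℝ =>
            (1 - x) ^ (C - A - B) * hyp2F1 (C - A) (C - B) (1 + C - A - B) (1 - x)) z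
        - A * B * ((1 - z) ^ (C - A - B) * hyp2F1 (C - A) (C - B) (1 + C - A - B) (1 - z))
        = 0 := by
  intro z hz
  have hc : ∀ k : ℕ, (1 + C - A - B) + (k : ℝ) ≠ 0 := by
    intro k hk
    apply h (-(k : ℤ) - 1)
    push_cast
    linarith
  have Feq : (fun x : ℝ =>
      (1 - x) ^ (C - A - B) * hyp2F1 (C - A) (C - B) (1 + C - A - B) (1 - x))
      = fun x : ℝ => (1 - x) ^ (C - A - B) * hS0 (C - A) (C - B) (1 + C - A - B) (1 - x) := by
    funext x
    rw [hyp2F1_eq_hS0]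
  rw [Feq, hyp2F1_eq_hS0]
  have d1 : ∀ x ∈ Ioo (0:ℝ) 1,
      deriv (fun x : ℝ => (1 - x) ^ (C - A - B) * hS0 (C - A) (C - B) (1 + C - A - B) (1 - x)) x
      = -((C - A - B) * ((1 - x) ^ (C - A - B - 1) * hS0 (C - A) (C - B) (1 + C - A - B) (1 - x)))
        - (1 - x) ^ (C - A - B) * hS1 (C - A) (C - B) (1 + C - A - B) (1 - x) :=
    fun x hx => (hasDerivAt_outer (C - A - B) hc hx).deriv
  have d2 : deriv (deriv (fun x : ℝ =>
      (1 - x) ^ (C - A - B) * hS0 (C - A) (C - B) (1 + C - A - B) (1 - x))) z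
      = (C - A - B) * (C - A - B - 1) *
          ((1 - z) ^ (C - A - B - 1 - 1) * hS0 (C - A) (C - B) (1 + C - A - B) (1 - z))
        + 2 * (C - A - B) * ((1 - z) ^ (C - A - B - 1) * hS1 (C - A) (C - B) (1 + C - A - B) (1 - z))
        + (1 - z) ^ (C - A - B) * hS2 (C - A) (C - B) (1 + C - A - B) (1 - z) := by
    have heq : deriv (fun x : ℝ =>
        (1 - x) ^ (C - A - B) * hS0 (C - A) (C - B) (1 + C - A - B) (1 - x))
        =ᶠ[nhds z] fun x : ℝ =>
          -((C - A - B) * ((1 - x) ^ (C - A - B - 1) * hS0 (C - A) (C - B) (1 + C - A - B) (1 - x)))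
          - (1 - x) ^ (C - A - B) * hS1 (C - A) (C - B) (1 + C - A - B) (1 - x) := by
      filter_upwards [isOpen_Ioo.mem_nhds hz] with y hy using d1 y hy
    rw [heq.deriv_eq]
    exact (hasDerivAt_outer' (C - A - B) hc hz).deriv
  rw [d2, d1 z hz]
  have hz0 := hz.1
  have hz1 := hz.2
  have hw : (1 - z) ∈ Ioo (0:ℝ) 1 := ⟨by linarith, by linarith⟩
  have hwpos : (0:ℝ) < 1 - z := hw.1
  have ode := hyp_ode (a := C - A) (b := C - B) (c := 1 + C - A - B) hc hw
  have hP1 : (1 - z) ^ (C - A - B - 1) = (1 - z) ^ (C - A - B - 1 - 1) * (1 - z) := by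
    have h' := (Real.rpow_add hwpos (C - A - B - 1 - 1) 1).symm
    rw [Real.rpow_one, show C - A - B - 1 - 1 + 1 = C - A - B - 1 by ring] at h'
    exact h'.symm
  have hP0 : (1 - z) ^ (C - A - B) = (1 - z) ^ (C - A - B - 1 - 1) * (1 - z) * (1 - z) := by
    have h' := (Real.rpow_add hwpos (C - A - B - 1) 1).symm
    rw [Real.rpow_one, show C - A - B - 1 + 1 = C - A - B by ring] at h'
    rw [← h', hP1]
  rw [hP0, hP1]
  linear_combination ((1 - z) ^ (C - A - B - 1 - 1) * (1 - z) * (1 - z)) * ode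
end
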